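/- arXiv:1901.03306 — 12 statements merged into one kernel-verified Lean document; each statement's English description precedes it below -/
import Mathlib

section
/- Let (X, X_+) be an ordered Banach space and assume that X is separable as a topological space. Then there exists a strictly positive functional in X'. -/
/-- If an ordered Banach space `X` is separable, then there exists a
strictly positive functional in `X'`. -/
theorem exists_strictly_positive_functional_of_separable
    {X : Type*} [NormedAddCommGroup X] [NormedSpace ℝ X] [CompleteSpace X]
    [TopologicalSpace.SeparableSpace X]
    (C : Set X) (hne : C.Nonempty) (hclosed : IsClosed C)
    (hcone : ∀ (a b : ℝ), 0 ≤ a → 0 ≤ b → ∀ x ∈ C, ∀ y ∈ C, a • x + b • y ∈ C)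
    (hpointed : ∀ x ∈ C, -x ∈ C → x = 0) :
    ∃ x' : X →L[ℝ] ℝ, (∀ x ∈ C, 0 ≤ x' x) ∧ ∀ x ∈ C, x ≠ 0 → 0 < x' x := by
  classical
  have h0 : (0 : X) ∈ C := by
    obtain ⟨c, hc⟩ := hne
    simpa using hcone 0 0 le_rfl le_rfl c hc c hc
  by_cases htriv : ∀ x ∈ C, x = (0 : X)
  · exact ⟨0, by simp, fun x hx hx0 => absurd (htriv x hx) hx0⟩
  push_neg at htriv
  have hconv : Convex ℝ C := fun x hx y hy a b ha hb _ => hcone a b ha hb x hx y hy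
  -- for each nonzero x in C, a functional nonnegative on C and positive at x
  have key : ∀ x : {z : X // z ∈ C ∧ z ≠ 0},
      ∃ f : X →L[ℝ] ℝ, (∀ y ∈ C, 0 ≤ f y) ∧ 0 < f x := by
    rintro ⟨x, hx, hx0⟩
    have hnx : -x ∉ C := fun h => hx0 (hpointed x hx h)
    obtain ⟨f, u, hfu, hfC⟩ := geometric_hahn_banach_point_closed hconv hclosed hnx
    have hu0 : u < 0 := by simpa using hfC 0 h0
    refine ⟨f, ?_, ?_⟩
    · intro y hy
      by_contra hneg
      push_neg at hneg
      set t : ℝ := (u - 1) / f y with ht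
      have htpos : 0 < t := div_pos_of_neg_of_neg (by linarith) hneg
      have hty : t • y ∈ C := by
        simpa using hcone t 0 htpos.le le_rfl y hy y hy
      have := hfC _ hty
      rw [map_smul, smul_eq_mul, ht, div_mul_cancel₀ _ (ne_of_lt hneg)] at this
      linarith
    · have : f (-x) < u := hfu
      rw [map_neg] at this
      linarith
  choose f hfpos hfx using key
  have hUopen : ∀ i : {z : X // z ∈ C ∧ z ≠ 0}, IsOpen {z : X | 0 < f i z} := fun i =>
    isOpen_lt continuous_const (f i).continuous
  have hsc : SecondCountableTopology X := UniformSpace.secondCountable_of_separable X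
  obtain ⟨t, htc, htU⟩ :=
    TopologicalSpace.isOpen_iUnion_countable (fun i => {z : X | 0 < f i z}) hUopen
  obtain ⟨x0, hx0C, hx0ne⟩ := htriv
  have htne : t.Nonempty := by
    have hx0U : x0 ∈ ⋃ i, {z : X | 0 < f i z} :=
      Set.mem_iUnion.2 ⟨⟨x0, hx0C, hx0ne⟩, hfx _⟩
    rw [← htU] at hx0U
    obtain ⟨i, hi, -⟩ := Set.mem_iUnion₂.1 hx0U
    exact ⟨i, hi⟩
  obtain ⟨e, he⟩ := htc.exists_eq_range htne
  have hden : ∀ n : ℕ, (0:ℝ) < (2 : ℝ) ^ n * (1 + ‖f (e n)‖) := by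
    intro n
    have h1 : (0:ℝ) < 1 + ‖f (e n)‖ := by positivity
    positivity
  set F : ℕ → X →L[ℝ] ℝ :=
    fun n => ((2 : ℝ) ^ n * (1 + ‖f (e n)‖))⁻¹ • f (e n) with hF
  have hFapp : ∀ n x, F n x = ((2 : ℝ) ^ n * (1 + ‖f (e n)‖))⁻¹ * f (e n) x := by
    intro n x; simp [hF]
  have hFbound : ∀ n, ‖F n‖ ≤ (1 / 2) ^ n := by
    intro n
    have h1 : (0:ℝ) < 1 + ‖f (e n)‖ := by positivity
    have hnorm : ‖F n‖ = ((2 : ℝ) ^ n * (1 + ‖f (e n)‖))⁻¹ * ‖f (e n)‖ := by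
      simp only [hF]
      rw [norm_smul ((2 : ℝ) ^ n * (1 + ‖f (e n)‖))⁻¹ (f (e n)), Real.norm_eq_abs,
        abs_of_pos (inv_pos.2 (hden n))]
    rw [hnorm, mul_inv, mul_assoc]
    have h2 : (1 + ‖f (e n)‖)⁻¹ * ‖f (e n)‖ ≤ 1 := by
      rw [inv_mul_le_iff₀ h1]
      linarith [norm_nonneg (f (e n))]
    calc ((2:ℝ) ^ n)⁻¹ * ((1 + ‖f (e n)‖)⁻¹ * ‖f (e n)‖)
        ≤ ((2:ℝ) ^ n)⁻¹ * 1 := mul_le_mul_of_nonneg_left h2 (by positivity)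
      _ = (1 / 2) ^ n := by rw [mul_one, one_div, inv_pow]
  have hsum : Summable F :=
    Summable.of_norm_bounded summable_geometric_two hFbound
  have hgapp : ∀ x : X, (∑' n, F n) x = ∑' n, F n x := by
    intro x
    exact (hsum.hasSum.mapL (ContinuousLinearMap.apply ℝ ℝ x)).tsum_eq.symm
  have hterm_nonneg : ∀ x ∈ C, ∀ n, 0 ≤ F n x := by
    intro x hx n
    rw [hFapp]
    exact mul_nonneg (inv_pos.2 (hden n)).le (hfpos (e n) x hx)
  have htermsum : ∀ x : X, Summable (fun n => F n x) :=
    fun x => hsum.mapL (ContinuousLinearMap.apply ℝ ℝ x)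
  refine ⟨∑' n, F n, ?_, ?_⟩
  · intro x hx
    rw [hgapp]
    exact tsum_nonneg (hterm_nonneg x hx)
  · intro x hx hx0
    have hxU : x ∈ ⋃ i, {z : X | 0 < f i z} :=
      Set.mem_iUnion.2 ⟨⟨x, hx, hx0⟩, hfx _⟩
    rw [← htU] at hxU
    obtain ⟨i, hi, hiU⟩ := Set.mem_iUnion₂.1 hxU
    obtain ⟨n, rfl⟩ : i ∈ Set.range e := he ▸ hi
    have hpos : 0 < F n x := by
      rw [hFapp]
      exact mul_pos (inv_pos.2 (hden n)) hiU
    rw [hgapp]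
    exact Summable.tsum_pos (htermsum x) (hterm_nonneg x hx) n hpos
end

section
/- Let (X, X_+) be an ordered Banach space whose positive cone X_+ has nonempty topological interior. Then for every vector x ∈ X_+ the following are equivalent: (i) x is an almost interior point of X_+; (ii) x is a quasi-interior point of X_+; (iii) x lies in the topological interior of X_+. -/
/-- If the positive cone `X₊` of an ordered Banach space has nonempty
topological interior, then for `x ∈ X₊` the following are equivalent: (i) `x` is an
almost interior point of `X₊`; (ii) `x` is a quasi-interior point of `X₊`; (iii) `x`
lies in the topological interior of `X₊`. -/
theorem almost_interior_iff_quasi_interior_iff_interior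
    {X : Type*} [NormedAddCommGroup X] [NormedSpace ℝ X] [CompleteSpace X]
    (C : Set X) (hne : C.Nonempty) (hclosed : IsClosed C)
    (hcone : ∀ (a b : ℝ), 0 ≤ a → 0 ≤ b → ∀ x ∈ C, ∀ y ∈ C, a • x + b • y ∈ C)
    (hpointed : ∀ x ∈ C, -x ∈ C → x = 0)
    (hint : (interior C).Nonempty)
    (x : X) (hx : x ∈ C) :
    List.TFAE
      [∀ x' : X →L[ℝ] ℝ, (∀ y ∈ C, 0 ≤ x' y) → x' ≠ 0 → 0 < x' x,
       Dense {y : X | ∃ l : ℝ, 0 ≤ l ∧ y + l • x ∈ C ∧ l • x - y ∈ C},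
       x ∈ interior C] := by
  have hconv : Convex ℝ C := fun a ha b hb t s ht hs hts =>
    hcone t s ht hs a ha b hb
  tfae_have 3 → 2 := by
    intro h3
    obtain ⟨ε, hε, hball⟩ := Metric.mem_nhds_iff.mp (mem_interior_iff_mem_nhds.mp h3)
    intro y
    apply subset_closure
    set l : ℝ := (‖y‖ + 1) / ε with hl
    have hl0 : 0 < l := by positivity
    refine ⟨l, hl0.le, ?_, ?_⟩
    · have : x + l⁻¹ • y ∈ C := by
        apply hball
        simp only [Metric.mem_ball, dist_self_add_left, norm_smul, norm_inv,
          Real.norm_eq_abs, abs_of_pos hl0]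
        rw [inv_mul_lt_iff₀ hl0, hl, div_mul_eq_mul_div, mul_comm]
        rw [lt_div_iff₀ hε] at *
        nlinarith [norm_nonneg y]
      have := hcone l 0 hl0.le le_rfl _ this _ this
      simpa [smul_add, smul_smul, mul_inv_cancel₀ hl0.ne', add_comm] using this
    · have : x + l⁻¹ • (-y) ∈ C := by
        apply hball
        simp only [Metric.mem_ball, dist_self_add_left, norm_smul, norm_inv, norm_neg,
          Real.norm_eq_abs, abs_of_pos hl0]
        rw [inv_mul_lt_iff₀ hl0, hl, div_mul_eq_mul_div, mul_comm]
        rw [lt_div_iff₀ hε] at *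
        nlinarith [norm_nonneg y]
      have := hcone l 0 hl0.le le_rfl _ this _ this
      simpa [smul_add, smul_smul, mul_inv_cancel₀ hl0.ne', sub_eq_add_neg] using this
  tfae_have 2 → 1 := by
    intro h2 x' hpos hne0
    rcases lt_or_eq_of_le (hpos x hx) with h | h
    · exact h
    exfalso
    apply hne0
    have hzero : ∀ y ∈ {y : X | ∃ l : ℝ, 0 ≤ l ∧ y + l • x ∈ C ∧ l • x - y ∈ C},
        x' y = 0 := by
      rintro y ⟨l, hl, h1, h2'⟩
      have a1 := hpos _ h1
      have a2 := hpos _ h2'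
      simp only [map_add, map_sub, map_smul, smul_eq_mul, ← h] at a1 a2
      linarith
    ext y
    have : Set.EqOn (⇑x') (fun _ => (0:ℝ)) (Set.univ : Set X) := by
      rw [← h2.closure_eq]
      exact Set.EqOn.closure (fun z hz => hzero z hz) x'.continuous continuous_const
    simpa using this (Set.mem_univ y)
  tfae_have 1 → 3 := by
    intro h1
    by_contra hnx
    obtain ⟨f, hf⟩ := geometric_hahn_banach_open_point hconv.interior isOpen_interior hnx
    obtain ⟨a₀, ha₀⟩ := hint
    -- f ≤ f x on C
    have hle : ∀ y ∈ C, f y ≤ f x := by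
      intro y hy
      have hyc : y ∈ closure (interior C) := by
        have htend : Filter.Tendsto (fun t : ℝ => t • a₀ + (1 - t) • y)
            (nhdsWithin 0 (Set.Ioi (0:ℝ))) (nhds y) := by
          have : Filter.Tendsto (fun t : ℝ => t • a₀ + (1 - t) • y) (nhds 0) (nhds y) := by
            have hc : Continuous (fun t : ℝ => t • a₀ + (1 - t) • y) := by fun_prop
            have := hc.tendsto 0
            simpa using this
          exact this.mono_left nhdsWithin_le_nhds
        refine mem_closure_of_tendsto htend ?_
        filter_upwards [Ioo_mem_nhdsGT_of_mem (Set.mem_Ico.mpr ⟨le_refl 0, one_pos⟩)] with t ht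
        exact hconv.combo_interior_self_mem_interior ha₀ hy ht.1 (by linarith [ht.2]) (by ring)
      have hclosed' : IsClosed {z : X | f z ≤ f x} := isClosed_le f.continuous continuous_const
      have : closure (interior C) ⊆ {z : X | f z ≤ f x} :=
        hclosed'.closure_subset_iff.mpr fun z hz => (hf z hz).le
      exact this hyc
    have h0C : (0 : X) ∈ C := by simpa using hcone 0 0 le_rfl le_rfl x hx x hx
    have h2x : (2 : ℝ) • x ∈ C := by simpa using hcone 2 0 zero_le_two le_rfl x hx x hx
    have hfx0 : f x = 0 := by
      have := hle 0 h0C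
      have := hle _ h2x
      simp only [map_smul, smul_eq_mul, map_zero] at *
      linarith
    have := h1 (-f) (fun y hy => by simpa using (hle y hy).trans hfx0.le)
      (by
        intro h
        have hfa : f a₀ = 0 := by
          have := ContinuousLinearMap.ext_iff.mp h a₀
          simpa [neg_eq_zero] using this
        have := hf a₀ ha₀
        rw [hfa, hfx0] at this
        exact lt_irrefl _ this)
    simp only [ContinuousLinearMap.neg_apply, hfx0] at this
    linarith
  tfae_finish
end

section
/- Let (X, X_+) be an ordered Banach space such that the dimension of X is at least 2 and X_+ ≠ {0}. Then there exist a nonzero point x ∈ X_+ which is not an almost interior point of X_+, and a nonzero positive functional x' ∈ X' which is not strictly positive. -/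
/-- If an ordered Banach space has dimension at least `2` and nonzero
positive cone, then there exist a nonzero positive vector which is not an almost interior
point of the cone, and a nonzero positive functional which is not strictly positive. -/
theorem exists_non_almost_interior_point_and_non_strictly_positive_functional
    {X : Type*} [NormedAddCommGroup X] [NormedSpace ℝ X] [CompleteSpace X]
    (C : Set X) (hne : C.Nonempty) (hclosed : IsClosed C)
    (hcone : ∀ (a b : ℝ), 0 ≤ a → 0 ≤ b → ∀ x ∈ C, ∀ y ∈ C, a • x + b • y ∈ C)
    (hpointed : ∀ x ∈ C, -x ∈ C → x = 0)
    (hdim : 2 ≤ Module.rank ℝ X)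
    (hCnz : C ≠ {0}) :
    (∃ x ∈ C, x ≠ 0 ∧ ¬ (∀ x' : X →L[ℝ] ℝ, (∀ y ∈ C, 0 ≤ x' y) → x' ≠ 0 → 0 < x' x)) ∧
      (∃ x' : X →L[ℝ] ℝ, (∀ y ∈ C, 0 ≤ x' y) ∧ x' ≠ 0 ∧
        ¬ (∀ x ∈ C, x ≠ 0 → 0 < x' x)) := by
  classical
  obtain ⟨c, hc⟩ := hne
  have h0C : (0:X) ∈ C := by
    have := hcone 0 0 le_rfl le_rfl c hc c hc; simpa using this
  have hsmul : ∀ (t : ℝ), 0 ≤ t → ∀ x ∈ C, t • x ∈ C := by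
    intro t ht x hx
    have := hcone t 0 ht le_rfl x hx x hx; simpa using this
  have hCconv : Convex ℝ C := fun x hx y hy a b ha hb _ => hcone a b ha hb x hx y hy
  obtain ⟨x₀, hx₀C, hx₀ne⟩ : ∃ x, x ∈ C ∧ x ≠ 0 := by
    by_contra h; push_neg at h
    exact hCnz (Set.eq_singleton_iff_unique_mem.2 ⟨h0C, fun x hx => by
      by_contra hne'; exact hne' (h x hx ▸ rfl)⟩)
  -- positivity from separation
  have dualpos : ∀ (f : X →L[ℝ] ℝ) (u : ℝ), (∀ b ∈ C, u ≤ f b) → ∀ y ∈ C, 0 ≤ f y := by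
    intro f u hf y hy
    by_contra hneg; push_neg at hneg
    have hu0 : u ≤ 0 := by simpa using hf 0 h0C
    have key : ∀ t : ℝ, 0 ≤ t → u ≤ t * f y := by
      intro t ht
      have := hf _ (hsmul t ht y hy)
      simpa [map_smul, smul_eq_mul] using this
    have ht0 : (0:ℝ) ≤ (u - 1) / (f y) :=
      div_nonneg_of_nonpos (by linarith) hneg.le
    have := key _ ht0
    rw [div_mul_cancel₀ _ (ne_of_lt hneg)] at this
    linarith
  -- a nonzero non-interior point of C
  obtain ⟨a, haC, hane, hanotint⟩ : ∃ a, a ∈ C ∧ a ≠ 0 ∧ a ∉ interior C := by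
    by_contra h; push_neg at h
    have hopen : IsOpen (C \ {0}) := by
      have heq : C \ {0} = interior C \ {0} := by
        apply Set.Subset.antisymm
        · rintro x ⟨hx, hx0⟩; exact ⟨h x hx hx0, hx0⟩
        · rintro x ⟨hx, hx0⟩; exact ⟨interior_subset hx, hx0⟩
      rw [heq]; exact isOpen_interior.sdiff isClosed_singleton
    have hconn := ((isPathConnected_compl_singleton_of_one_lt_rank
      (lt_of_lt_of_le Cardinal.one_lt_two hdim) (0:X)).isConnected).isPreconnected
    have hcover : ({(0:X)}ᶜ : Set X) ⊆ (C \ {0}) ∪ Cᶜ := by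
      intro x hx
      by_cases hxC : x ∈ C
      · exact Or.inl ⟨hxC, hx⟩
      · exact Or.inr hxC
    have hne1 : (({(0:X)}ᶜ : Set X) ∩ (C \ {0})).Nonempty :=
      ⟨x₀, by simpa using hx₀ne, hx₀C, by simpa using hx₀ne⟩
    have hne2 : (({(0:X)}ᶜ : Set X) ∩ Cᶜ).Nonempty := by
      refine ⟨-x₀, by simpa using hx₀ne, fun hmem => hx₀ne (hpointed x₀ hx₀C hmem)⟩
    obtain ⟨w, -, hw1, hw2⟩ := hconn (C \ {0}) Cᶜ hopen hclosed.isOpen_compl hcover hne1 hne2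
    exact hw2 hw1.1
  -- parameters
  set r : ℝ := ‖a‖ with hr
  have hrpos : 0 < r := norm_pos_iff.2 hane
  set δ : ℝ := min (1/2) ((r/2)^2) with hδ
  have hδpos : 0 < δ := lt_min (by norm_num) (by positivity)
  set sqd : ℝ := Real.sqrt δ with hsqd
  have hsqdpos : 0 < sqd := Real.sqrt_pos.2 hδpos
  have hsqdsq : sqd * sqd = δ := Real.mul_self_sqrt hδpos.le
  have hsqdlt1 : sqd < 1 := by
    rw [hsqd]
    rw [show (1:ℝ) = Real.sqrt 1 by simp]
    exact Real.sqrt_lt_sqrt hδpos.le (lt_of_le_of_lt (min_le_left _ _) (by norm_num))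
  have hsqdle : sqd ≤ r / 2 := by
    have : sqd ≤ Real.sqrt ((r/2)^2) := Real.sqrt_le_sqrt (min_le_right _ _)
    rwa [Real.sqrt_sq (by positivity)] at this
  -- a point close to a outside C
  obtain ⟨p, hpball, hpC⟩ : ∃ p, dist p a < δ ∧ p ∉ C := by
    by_contra hsub; push_neg at hsub
    exact hanotint (mem_interior.2 ⟨Metric.ball a δ, fun x hx => hsub x hx,
      Metric.isOpen_ball, Metric.mem_ball_self hδpos⟩)
  -- separating functional
  obtain ⟨f, u₁, hfp, hfC⟩ := geometric_hahn_banach_point_closed hCconv hclosed hpC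
  have hu₁neg : u₁ < 0 := by simpa using hfC 0 h0C
  have hfne : f ≠ 0 := by
    intro h0; rw [h0] at hfp; simp at hfp; linarith
  have hfpos : ∀ y ∈ C, 0 ≤ f y := dualpos f u₁ (fun b hb => (hfC b hb).le)
  set g : X →L[ℝ] ℝ := ‖f‖⁻¹ • f with hg
  have hnf : (0:ℝ) < ‖f‖ := norm_pos_iff.2 hfne
  have hg1 : ‖g‖ = 1 := by
    rw [hg, norm_smul (‖f‖⁻¹) f]
    simp [inv_mul_cancel₀ hnf.ne']
  have hgpos : ∀ y ∈ C, 0 ≤ g y := by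
    intro y hy
    have : g y = ‖f‖⁻¹ * f y := rfl
    rw [this]
    exact mul_nonneg (inv_nonneg.2 hnf.le) (hfpos y hy)
  have hgp : g p < 0 := by
    have : g p = ‖f‖⁻¹ * f p := rfl
    rw [this]
    exact mul_neg_of_pos_of_neg (inv_pos.2 hnf) (lt_trans hfp hu₁neg)
  have hga : g a < δ := by
    have h1 : g a = g p + g (a - p) := by rw [map_sub]; ring
    have h2 : g (a - p) ≤ ‖g‖ * ‖a - p‖ := by
      calc g (a - p) ≤ |g (a - p)| := le_abs_self _
      _ = ‖g (a - p)‖ := (Real.norm_eq_abs _).symm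
      _ ≤ ‖g‖ * ‖a - p‖ := g.le_opNorm _
    have h3 : ‖a - p‖ < δ := by rw [← dist_eq_norm]; rwa [dist_comm] at hpball
    rw [hg1, one_mul] at h2
    rw [h1]
    linarith
  -- a direction deep inside the penalization cone
  obtain ⟨u₀, hu₀n, hu₀g⟩ : ∃ u₀ : X, ‖u₀‖ ≤ 1 ∧ g u₀ < -sqd := by
    by_contra hcon; push_neg at hcon
    have hb : ∀ x : X, ‖g x‖ ≤ sqd * ‖x‖ := by
      intro x
      rcases eq_or_ne x 0 with rfl | hx
      · simp
      · have hnx : (0:ℝ) < ‖x‖ := norm_pos_iff.2 hx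
        have hnorm1 : ‖(‖x‖⁻¹ • x : X)‖ = 1 := by
          rw [norm_smul (‖x‖⁻¹) x]; simp [inv_mul_cancel₀ hnx.ne']
        have h1 : -sqd ≤ g (‖x‖⁻¹ • x) := hcon _ (le_of_eq hnorm1)
        have h2 : -sqd ≤ g (-(‖x‖⁻¹ • x)) := hcon _ (by rw [norm_neg]; exact le_of_eq hnorm1)
        rw [map_neg] at h2
        rw [map_smul, smul_eq_mul] at h1 h2
        have e1 : ‖x‖ * (‖x‖⁻¹ * g x) = g x := by field_simp
        have l1 : ‖x‖ * (-sqd) ≤ g x := by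
          calc ‖x‖ * (-sqd) ≤ ‖x‖ * (‖x‖⁻¹ * g x) := by
                exact mul_le_mul_of_nonneg_left h1 hnx.le
          _ = g x := e1
        have h2' : ‖x‖⁻¹ * g x ≤ sqd := by linarith
        have l2 : g x ≤ ‖x‖ * sqd := by
          calc g x = ‖x‖ * (‖x‖⁻¹ * g x) := e1.symm
          _ ≤ ‖x‖ * sqd := mul_le_mul_of_nonneg_left h2' hnx.le
        rw [Real.norm_eq_abs, abs_le]
        refine ⟨?_, ?_⟩
        · calc -(sqd * ‖x‖) = ‖x‖ * (-sqd) := by ring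
          _ ≤ g x := l1
        · calc g x ≤ ‖x‖ * sqd := l2
          _ = sqd * ‖x‖ := by ring
    have := g.opNorm_le_bound hsqdpos.le hb
    rw [hg1] at this; linarith
  -- the approximate minimization step
  have step : ∀ (w : X), w ∈ C → ∀ (ε : ℝ), 0 < ε →
      ∃ y, (y ∈ C ∧ sqd * ‖y - w‖ + (g y - g w) ≤ 0) ∧
        ∀ x, x ∈ C → sqd * ‖x - w‖ + (g x - g w) ≤ 0 → g y - ε < g x := by
    intro w hw ε hε
    set S : Set X := {x | x ∈ C ∧ sqd * ‖x - w‖ + (g x - g w) ≤ 0} with hS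
    have hSne : S.Nonempty := ⟨w, hw, by simp⟩
    have hbdd : BddBelow (g '' S) := ⟨0, by rintro v ⟨x, hx, rfl⟩; exact hgpos x hx.1⟩
    have hlt : sInf (g '' S) < sInf (g '' S) + ε := lt_add_of_pos_right _ hε
    obtain ⟨v, hvmem, hv⟩ := exists_lt_of_csInf_lt (hSne.image g) hlt
    obtain ⟨y, hyS, rfl⟩ := hvmem
    refine ⟨y, hyS, fun x hx1 hx2 => ?_⟩
    have : sInf (g '' S) ≤ g x := csInf_le hbdd ⟨x, ⟨hx1, hx2⟩, rfl⟩
    linarith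
  choose F hF hP using step
  have hhalf : ∀ n : ℕ, (0:ℝ) < (1/2)^n := fun n => by positivity
  let seq : ℕ → {w : X // w ∈ C} := fun n => Nat.rec ⟨a, haC⟩
    (fun n p => ⟨F p.1 p.2 ((1/2)^n) (hhalf n), (hF p.1 p.2 ((1/2)^n) (hhalf n)).1⟩) n
  set z : ℕ → X := fun n => (seq n).1 with hzdef
  have hzC : ∀ n, z n ∈ C := fun n => (seq n).2
  have hz0 : z 0 = a := rfl
  have hstepS : ∀ n, sqd * ‖z (n+1) - z n‖ + (g (z (n+1)) - g (z n)) ≤ 0 :=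
    fun n => (hF (seq n).1 (seq n).2 ((1/2)^n) (hhalf n)).2
  have hnear : ∀ n, ∀ x, x ∈ C → sqd * ‖x - z n‖ + (g x - g (z n)) ≤ 0 →
      g (z (n+1)) - (1/2)^n < g x :=
    fun n => hP (seq n).1 (seq n).2 ((1/2)^n) (hhalf n)
  -- transitivity
  have hKtrans : ∀ n m, n ≤ m → sqd * ‖z m - z n‖ + (g (z m) - g (z n)) ≤ 0 := by
    intro n m hnm
    induction m, hnm using Nat.le_induction with
    | base => simp
    | succ m hnm ih =>
      have h1 := hstepS m
      have htri : ‖z (m+1) - z n‖ ≤ ‖z (m+1) - z m‖ + ‖z m - z n‖ := norm_sub_le_norm_sub_add_norm_sub _ _ _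
      have h2 : sqd * ‖z (m+1) - z n‖ ≤ sqd * ‖z (m+1) - z m‖ + sqd * ‖z m - z n‖ := by
        rw [← mul_add]; exact mul_le_mul_of_nonneg_left htri hsqdpos.le
      linarith
  have hgmono : ∀ n m, n ≤ m → g (z m) ≤ g (z n) := by
    intro n m hnm
    have := hKtrans n m hnm
    have hnn : 0 ≤ sqd * ‖z m - z n‖ := mul_nonneg hsqdpos.le (norm_nonneg _)
    linarith
  -- convergence of g ∘ z
  have hanti : Antitone (fun n => g (z n)) := fun n m hnm => hgmono n m hnm
  have hbddb : BddBelow (Set.range fun n => g (z n)) :=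
    ⟨0, by rintro v ⟨n, rfl⟩; exact hgpos _ (hzC n)⟩
  set L : ℝ := ⨅ n, g (z n) with hL
  have glim : Filter.Tendsto (fun n => g (z n)) Filter.atTop (nhds L) :=
    tendsto_atTop_ciInf hanti hbddb
  have hLle : ∀ n, L ≤ g (z n) := fun n => ciInf_le hbddb n
  -- z is Cauchy
  have hdistb : ∀ n m, n ≤ m → dist (z n) (z m) ≤ (g (z n) - L) / sqd := by
    intro n m hnm
    have h1 := hKtrans n m hnm
    have h2 : sqd * ‖z m - z n‖ ≤ g (z n) - L := by
      have := hLle m; linarith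
    rw [dist_eq_norm', le_div_iff₀ hsqdpos]
    linarith [h2]
  have hcauchy : CauchySeq z := by
    apply cauchySeq_of_le_tendsto_0 (fun N => (g (z N) - L) / sqd)
    · intro n m N hn hm
      rcases le_total n m with h | h
      · calc dist (z n) (z m) ≤ (g (z n) - L) / sqd := hdistb n m h
        _ ≤ (g (z N) - L) / sqd := by
            gcongr
            exact hgmono N n hn
      · calc dist (z n) (z m) = dist (z m) (z n) := dist_comm _ _
        _ ≤ (g (z m) - L) / sqd := hdistb m n h
        _ ≤ (g (z N) - L) / sqd := by
            gcongr
            exact hgmono N m hm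
    · have : Filter.Tendsto (fun N => (g (z N) - L) / sqd) Filter.atTop (nhds ((L - L)/sqd)) :=
        (glim.sub tendsto_const_nhds).div_const sqd
      simpa using this
  obtain ⟨zω, hzω⟩ := cauchySeq_tendsto_of_complete hcauchy
  have hzωC : zω ∈ C := hclosed.mem_of_tendsto hzω (Filter.Eventually.of_forall hzC)
  have hgzω : g zω = L :=
    tendsto_nhds_unique ((g.continuous.tendsto zω).comp hzω) glim
  have hzωK : ∀ n, sqd * ‖zω - z n‖ + (g zω - g (z n)) ≤ 0 := by
    intro n
    have hcont : Filter.Tendsto (fun m => sqd * ‖z m - z n‖ + (g (z m) - g (z n)))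
        Filter.atTop (nhds (sqd * ‖zω - z n‖ + (g zω - g (z n)))) := by
      have h1 : Filter.Tendsto (fun m => z m - z n) Filter.atTop (nhds (zω - z n)) :=
        hzω.sub tendsto_const_nhds
      exact ((h1.norm.const_mul sqd).add
        (((g.continuous.tendsto zω).comp hzω).sub tendsto_const_nhds))
    apply le_of_tendsto hcont
    filter_upwards [Filter.eventually_ge_atTop n] with m hm
    exact hKtrans n m hm
  -- zω is nonzero
  have hzωne : zω ≠ 0 := by
    intro h0
    have h1 := hzωK 0
    rw [hz0] at h1
    have h2 : g zω ≥ 0 := hgpos _ hzωC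
    have h3 : sqd * ‖zω - a‖ ≤ g a := by linarith
    rw [h0, zero_sub, norm_neg] at h3
    have h4 : sqd * r < sqd * r := by
      calc sqd * r ≤ g a := h3
      _ < δ := hga
      _ = sqd * sqd := hsqdsq.symm
      _ ≤ sqd * (r/2) := mul_le_mul_of_nonneg_left hsqdle hsqdpos.le
      _ < sqd * r := mul_lt_mul_of_pos_left (by linarith) hsqdpos
    exact lt_irrefl _ h4
  -- maximality: zω is a support-ish point
  have hmax : ∀ y, y ∈ C → sqd * ‖y - zω‖ + (g y - g zω) ≤ 0 → y = zω := by
    intro y hyC hyK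
    have hyS : ∀ n, sqd * ‖y - z n‖ + (g y - g (z n)) ≤ 0 := by
      intro n
      have h1 := hzωK n
      have htri : ‖y - z n‖ ≤ ‖y - zω‖ + ‖zω - z n‖ := norm_sub_le_norm_sub_add_norm_sub _ _ _
      have h2 : sqd * ‖y - z n‖ ≤ sqd * ‖y - zω‖ + sqd * ‖zω - z n‖ := by
        rw [← mul_add]; exact mul_le_mul_of_nonneg_left htri hsqdpos.le
      linarith
    have hgy : g zω ≤ g y := by
      have hev : ∀ n, g (z (n+1)) - (1/2)^n < g y := fun n => hnear n y hyC (hyS n)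
      have key : ∀ n : ℕ, L - (1/2)^n ≤ g y := by
        intro n
        have h1 := hev n
        have h2 := hLle (n+1)
        linarith
      have hlim : Filter.Tendsto (fun n : ℕ => L - (1/2)^n) Filter.atTop (nhds (L - 0)) :=
        Filter.Tendsto.sub tendsto_const_nhds
          (tendsto_pow_atTop_nhds_zero_of_lt_one (by norm_num) (by norm_num))
      rw [hgzω]
      have := le_of_tendsto hlim (Filter.Eventually.of_forall key)
      simpa using this
    have h5 : sqd * ‖y - zω‖ ≤ 0 := by linarith
    have h6 : ‖y - zω‖ = 0 := by
      by_contra hne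
      have hpos : 0 < ‖y - zω‖ := lt_of_le_of_ne (norm_nonneg _) (Ne.symm hne)
      have : 0 < sqd * ‖y - zω‖ := mul_pos hsqdpos hpos
      linarith
    exact sub_eq_zero.mp (norm_eq_zero.mp h6)
  -- the open convex penalization set
  set A : Set X := {x | sqd * ‖x - zω‖ + (g x - g zω) < 0} with hA
  have hcontf : Continuous fun x : X => sqd * ‖x - zω‖ + (g x - g zω) :=
    ((continuous_const.mul ((continuous_id.sub continuous_const).norm)).add
      (g.continuous.sub continuous_const))
  have hAopen : IsOpen A := isOpen_lt hcontf continuous_const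
  have hAconv : Convex ℝ A := by
    intro x hx y hy s t hs ht hst
    simp only [hA, Set.mem_setOf_eq] at hx hy ⊢
    have hzc : s • zω + t • zω = zω := by rw [← add_smul, hst, one_smul]
    have hsplit : (s • x + t • y) - zω = s • (x - zω) + t • (y - zω) := by
      calc (s • x + t • y) - zω = (s • x + t • y) - (s • zω + t • zω) := by rw [hzc]
      _ = s • (x - zω) + t • (y - zω) := by rw [smul_sub, smul_sub]; abel
    have hnorm : ‖(s • x + t • y) - zω‖ ≤ s * ‖x - zω‖ + t * ‖y - zω‖ := by
      rw [hsplit]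
      calc ‖s • (x - zω) + t • (y - zω)‖ ≤ ‖s • (x - zω)‖ + ‖t • (y - zω)‖ := norm_add_le _ _
      _ = s * ‖x - zω‖ + t * ‖y - zω‖ := by
          rw [norm_smul s (x - zω), norm_smul t (y - zω), Real.norm_of_nonneg hs,
            Real.norm_of_nonneg ht]
    have hg' : g (s • x + t • y) = s * g x + t * g y := by
      rw [map_add, map_smul, map_smul]; rfl
    have hgz : s * g zω + t * g zω = g zω := by rw [← add_mul, hst, one_mul]
    rcases hs.eq_or_lt with rfl | hs'
    · rw [zero_add] at hst
      subst hst
      simp only [zero_smul, one_smul, zero_add] at hnorm hg' ⊢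
      exact hy
    · have h1 : sqd * ‖(s • x + t • y) - zω‖ ≤
          s * (sqd * ‖x - zω‖) + t * (sqd * ‖y - zω‖) := by
        calc sqd * ‖(s • x + t • y) - zω‖ ≤ sqd * (s * ‖x - zω‖ + t * ‖y - zω‖) :=
              mul_le_mul_of_nonneg_left hnorm hsqdpos.le
        _ = s * (sqd * ‖x - zω‖) + t * (sqd * ‖y - zω‖) := by ring
      have h2 : s * (sqd * ‖x - zω‖) + s * (g x - g zω) < 0 := by
        calc s * (sqd * ‖x - zω‖) + s * (g x - g zω)
            = s * (sqd * ‖x - zω‖ + (g x - g zω)) := by ring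
        _ < 0 := mul_neg_of_pos_of_neg hs' hx
      have h3 : t * (sqd * ‖y - zω‖) + t * (g y - g zω) ≤ 0 := by
        calc t * (sqd * ‖y - zω‖) + t * (g y - g zω)
            = t * (sqd * ‖y - zω‖ + (g y - g zω)) := by ring
        _ ≤ 0 := mul_nonpos_of_nonneg_of_nonpos ht hy.le
      have h4 : g (s • x + t • y) - g zω = s * (g x - g zω) + t * (g y - g zω) := by
        rw [hg']; linear_combination hgz
      linarith [h1, h2, h3, h4]
  have hAne : zω + u₀ ∈ A := by
    simp only [hA, Set.mem_setOf_eq, add_sub_cancel_left]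
    have hgu : g (zω + u₀) - g zω = g u₀ := by rw [map_add]; ring
    rw [hgu]
    have : sqd * ‖u₀‖ ≤ sqd * 1 := mul_le_mul_of_nonneg_left hu₀n hsqdpos.le
    linarith
  have hdisj : Disjoint A C := by
    rw [Set.disjoint_left]
    intro x hxA hxC
    have hx0 := hmax x hxC (le_of_lt hxA)
    rw [hA, Set.mem_setOf_eq, hx0] at hxA
    simp at hxA
  obtain ⟨h, u, hhA, hhC⟩ := geometric_hahn_banach_open hAconv hAopen hCconv hdisj
  have hu0 : u ≤ 0 := by simpa using hhC 0 h0C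
  have hne0 : h ≠ 0 := by
    intro h0
    have := hhA (zω + u₀) hAne
    rw [h0] at this
    simp at this
    linarith
  have hposh : ∀ y ∈ C, 0 ≤ h y := dualpos h u hhC
  have hhzω : h zω = 0 := by
    have hle : h zω ≤ u := by
      have hmem : ∀ n : ℕ, zω + ((1/2)^n : ℝ) • u₀ ∈ A := by
        intro n
        simp only [hA, Set.mem_setOf_eq, add_sub_cancel_left]
        have hgu : g (zω + ((1/2)^n : ℝ) • u₀) - g zω = (1/2)^n * g u₀ := by
          rw [map_add, map_smul]; simp [smul_eq_mul]
        rw [hgu, norm_smul (((1:ℝ)/2)^n) u₀, Real.norm_of_nonneg (hhalf n).le]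
        have : sqd * ((1/2)^n * ‖u₀‖) + (1/2)^n * g u₀ =
            (1/2)^n * (sqd * ‖u₀‖ + g u₀) := by ring
        rw [this]
        apply mul_neg_of_pos_of_neg (hhalf n)
        have : sqd * ‖u₀‖ ≤ sqd * 1 := mul_le_mul_of_nonneg_left hu₀n hsqdpos.le
        linarith
      have hlt : ∀ n : ℕ, h zω + (1/2)^n * h u₀ < u := by
        intro n
        have := hhA _ (hmem n)
        rw [map_add, map_smul] at this
        simpa [smul_eq_mul] using this
      have hlim : Filter.Tendsto (fun n : ℕ => h zω + (1/2)^n * h u₀)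
          Filter.atTop (nhds (h zω + 0 * h u₀)) := by
        apply Filter.Tendsto.add tendsto_const_nhds
        exact Filter.Tendsto.mul_const _
          (tendsto_pow_atTop_nhds_zero_of_lt_one (by norm_num) (by norm_num))
      have := le_of_tendsto hlim (Filter.Eventually.of_forall (fun n => (hlt n).le))
      simpa using this
    have hge : u ≤ h zω := hhC zω hzωC
    have hnn : 0 ≤ h zω := hposh zω hzωC
    linarith
  refine ⟨⟨zω, hzωC, hzωne, fun hall => ?_⟩, ⟨h, hposh, hne0, fun hall => ?_⟩⟩
  · have := hall h hposh hne0
    rw [hhzω] at this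
    exact lt_irrefl 0 this
  · have := hall zω hzωC hzωne
    rw [hhzω] at this
    exact lt_irrefl 0 this
end

section
/- Let (X, X_+) be an ordered Banach space and let Y ⊆ X be a vector subspace (not necessarily closed) which contains at least one almost interior point y₀ of X_+. For every linear map y' : Y → ℝ (not assumed continuous) the following are equivalent: (i) there exists a nonzero positive functional x' ∈ X' whose restriction to Y equals y'; (ii) the set X_+ + ker y' is not dense in X and ⟨y', y₀⟩ > 0; (iii) the set X_+ + ker y' is not dense in X and ⟨y', y⟩ > 0 for every vector y ∈ Y which is an almost interior point of X_+. -/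
/-- Extension of linear functionals to positive functionals via almost
interior points. Let `Y ⊆ X` be a (not necessarily closed) vector subspace containing an
almost interior point `y₀` of `X₊` and let `y' : Y → ℝ` be linear (not assumed
continuous). Then the following are equivalent:
(i) `y'` extends to a nonzero positive functional `x' ∈ X'`;
(ii) `X₊ + ker y'` is not dense in `X` and `⟨y', y₀⟩ > 0`;
(iii) `X₊ + ker y'` is not dense in `X` and `⟨y', y⟩ > 0` for every `y ∈ Y` which is an
almost interior point of `X₊`. -/
theorem extension_of_functionals_via_almost_interior_points
    {X : Type*} [NormedAddCommGroup X] [NormedSpace ℝ X] [CompleteSpace X]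
    (C : Set X) (hne : C.Nonempty) (hclosed : IsClosed C)
    (hcone : ∀ (a b : ℝ), 0 ≤ a → 0 ≤ b → ∀ x ∈ C, ∀ y ∈ C, a • x + b • y ∈ C)
    (hpointed : ∀ x ∈ C, -x ∈ C → x = 0)
    (Y : Submodule ℝ X) (y' : Y →ₗ[ℝ] ℝ)
    (y₀ : X) (hy₀Y : y₀ ∈ Y) (hy₀C : y₀ ∈ C)
    (hy₀ai : ∀ x' : X →L[ℝ] ℝ, (∀ x ∈ C, 0 ≤ x' x) → x' ≠ 0 → 0 < x' y₀) :
    List.TFAE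
      [∃ x' : X →L[ℝ] ℝ, x' ≠ 0 ∧ (∀ x ∈ C, 0 ≤ x' x) ∧ ∀ z : Y, x' (z : X) = y' z,
       ¬ Dense {w : X | ∃ u ∈ C, ∃ z : Y, y' z = 0 ∧ w = u + (z : X)} ∧
         0 < y' ⟨y₀, hy₀Y⟩,
       ¬ Dense {w : X | ∃ u ∈ C, ∃ z : Y, y' z = 0 ∧ w = u + (z : X)} ∧
         ∀ y : Y, (y : X) ∈ C →
           (∀ x' : X →L[ℝ] ℝ, (∀ x ∈ C, 0 ≤ x' x) → x' ≠ 0 → 0 < x' (y : X)) →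
           0 < y' y] := by
  set S : Set X := {w : X | ∃ u ∈ C, ∃ z : Y, y' z = 0 ∧ w = u + (z : X)} with hSdef
  have h0C : (0 : X) ∈ C := by
    have := hcone 0 0 le_rfl le_rfl y₀ hy₀C y₀ hy₀C
    simpa using this
  have hCS : C ⊆ S := fun u hu => ⟨u, hu, 0, by simp, by simp⟩
  have hkerS : ∀ z : Y, y' z = 0 → (z : X) ∈ S :=
    fun z hz => ⟨0, h0C, z, hz, by simp⟩
  tfae_have 1 → 3 := by
    rintro ⟨x', hx0, hxpos, hxY⟩
    constructor
    · obtain ⟨v, hv⟩ : ∃ v, x' v ≠ 0 := by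
        by_contra h; push_neg at h
        exact hx0 (ContinuousLinearMap.ext fun v => by simp [h v])
      have hsub : S ⊆ {w | 0 ≤ x' w} := by
        rintro w ⟨u, hu, z, hz, rfl⟩
        have hz0 : x' (z : X) = 0 := by rw [hxY z, hz]
        simp only [Set.mem_setOf_eq, map_add, hz0, add_zero]
        exact hxpos u hu
      have hc : closure S ⊆ {w | 0 ≤ x' w} :=
        closure_minimal hsub (isClosed_le continuous_const x'.continuous)
      intro hdense
      rcases lt_or_gt_of_ne hv with h | h
      · have hm : v ∈ closure S := hdense v
        exact absurd (hc hm) (not_le.2 h)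
      · have hm : -v ∈ closure S := hdense (-v)
        have := hc hm
        simp only [Set.mem_setOf_eq, map_neg] at this
        linarith
    · intro y hyC hyai
      have := hyai x' hxpos hx0
      rwa [hxY y] at this
  tfae_have 3 → 2 := by
    rintro ⟨hnd, hpos⟩
    exact ⟨hnd, hpos ⟨y₀, hy₀Y⟩ hy₀C hy₀ai⟩
  tfae_have 2 → 1 := by
    rintro ⟨hnd, hy'⟩
    obtain ⟨v, hv⟩ : ∃ v, v ∉ closure S := by
      by_contra h; push_neg at h; exact hnd fun x => h x
    have hconv : Convex ℝ (closure S) := by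
      apply Convex.closure
      rintro w₁ ⟨u₁, hu₁, z₁, hz₁, rfl⟩ w₂ ⟨u₂, hu₂, z₂, hz₂, rfl⟩ a b ha hb hab
      refine ⟨a • u₁ + b • u₂, hcone a b ha hb u₁ hu₁ u₂ hu₂, a • z₁ + b • z₂, ?_, ?_⟩
      · simp [map_add, map_smul, hz₁, hz₂]
      · push_cast; module
    obtain ⟨f, t, hft, htv⟩ := geometric_hahn_banach_closed_point hconv isClosed_closure hv
    have ht0 : 0 < t := by
      have := hft 0 (subset_closure (hCS h0C))
      simpa using this
    have hfS : ∀ w ∈ S, f w ≤ 0 := by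
      intro w hw
      by_contra h
      push_neg at h
      have hrw : ((|t| + 1) / f w) • w ∈ S := by
        obtain ⟨u, hu, z, hz, rfl⟩ := hw
        refine ⟨((|t| + 1) / f (u + z)) • u, ?_, ((|t| + 1) / f (u + z)) • z, ?_, ?_⟩
        · have := hcone ((|t| + 1) / f (u + z)) 0 (by positivity) le_rfl u hu u hu
          simpa using this
        · simp [map_smul, hz]
        · push_cast; module
      have hlt := hft _ (subset_closure hrw)
      rw [map_smul, smul_eq_mul, div_mul_cancel₀ _ h.ne'] at hlt
      have := le_abs_self t
      linarith
    set g : X →L[ℝ] ℝ := -f with hgdef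
    have hgpos : ∀ x ∈ C, 0 ≤ g x := by
      intro x hx
      have := hfS x (hCS hx)
      simp [hgdef]; linarith
    have hgn : g ≠ 0 := by
      intro h
      have : g v = 0 := by rw [h]; rfl
      simp only [hgdef, ContinuousLinearMap.neg_apply] at this
      linarith
    have hgy₀ : 0 < g y₀ := hy₀ai g hgpos hgn
    have hgker : ∀ z : Y, y' z = 0 → g (z : X) = 0 := by
      intro z hz
      have h1 := hfS _ (hkerS z hz)
      have h2 := hfS _ (hkerS (-z) (by simp [hz]))
      simp only [Submodule.coe_neg, map_neg] at h2
      simp only [hgdef, ContinuousLinearMap.neg_apply]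
      linarith
    have hy'0 : y' ⟨y₀, hy₀Y⟩ ≠ 0 := ne_of_gt hy'
    refine ⟨(y' ⟨y₀, hy₀Y⟩ / g y₀) • g, ?_, ?_, ?_⟩
    · intro h
      have : ((y' ⟨y₀, hy₀Y⟩ / g y₀) • g) y₀ = 0 := by rw [h]; rfl
      rw [ContinuousLinearMap.smul_apply, smul_eq_mul, div_mul_cancel₀ _ hgy₀.ne'] at this
      exact hy'0 this
    · intro x hx
      rw [ContinuousLinearMap.smul_apply, smul_eq_mul]
      have := hgpos x hx
      positivity
    · intro z
      have hw : y' (z - (y' z / y' ⟨y₀, hy₀Y⟩) • ⟨y₀, hy₀Y⟩) = 0 := by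
        rw [map_sub, map_smul, smul_eq_mul, div_mul_cancel₀ _ hy'0, sub_self]
      have hg0 := hgker _ hw
      simp only [Submodule.coe_sub, Submodule.coe_smul, map_sub, map_smul, smul_eq_mul] at hg0
      have hgz : g (z : X) = (y' z / y' ⟨y₀, hy₀Y⟩) * g y₀ := by linarith
      rw [ContinuousLinearMap.smul_apply, smul_eq_mul, hgz]
      field_simp
  tfae_finish
end

section
/- Let (X, X_+) and (Y, Y_+) be ordered Banach spaces such that X_+ contains an almost interior point, and let T : X → Y be a positive bounded linear operator. Then the following are equivalent: (i) there exists x ∈ X_+ such that Tx is an almost interior point of Y_+; (ii) the only positive functional y' ∈ Y' with T'y' = 0 (where T' is the adjoint of T) is y' = 0; (iii) T maps every almost interior point of X_+ to an almost interior point of Y_+. -/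
/-- Let `X, Y` be ordered Banach spaces such that `X₊` contains an
almost interior point, and let `T : X → Y` be a positive bounded operator. TFAE:
(i) `T x` is an almost interior point of `Y₊` for some `x ∈ X₊`;
(ii) `ker T' ∩ Y'₊ = {0}`;
(iii) `T` maps almost interior points of `X₊` to almost interior points of `Y₊`. -/
theorem almost_interior_points_by_functional_condition
    {X : Type*} [NormedAddCommGroup X] [NormedSpace ℝ X] [CompleteSpace X]
    {Y : Type*} [NormedAddCommGroup Y] [NormedSpace ℝ Y] [CompleteSpace Y]
    (C : Set X) (hCne : C.Nonempty) (hCclosed : IsClosed C)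
    (hCcone : ∀ (a b : ℝ), 0 ≤ a → 0 ≤ b → ∀ x ∈ C, ∀ y ∈ C, a • x + b • y ∈ C)
    (hCpointed : ∀ x ∈ C, -x ∈ C → x = 0)
    (D : Set Y) (hDne : D.Nonempty) (hDclosed : IsClosed D)
    (hDcone : ∀ (a b : ℝ), 0 ≤ a → 0 ≤ b → ∀ x ∈ D, ∀ y ∈ D, a • x + b • y ∈ D)
    (hDpointed : ∀ y ∈ D, -y ∈ D → y = 0)
    (x₀ : X) (hx₀C : x₀ ∈ C)
    (hx₀ai : ∀ x' : X →L[ℝ] ℝ, (∀ x ∈ C, 0 ≤ x' x) → x' ≠ 0 → 0 < x' x₀)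
    (T : X →L[ℝ] Y) (hTpos : ∀ x ∈ C, T x ∈ D) :
    List.TFAE
      [∃ x ∈ C, ∀ y' : Y →L[ℝ] ℝ, (∀ y ∈ D, 0 ≤ y' y) → y' ≠ 0 → 0 < y' (T x),
       ∀ y' : Y →L[ℝ] ℝ, (∀ y ∈ D, 0 ≤ y' y) → y'.comp T = 0 → y' = 0,
       ∀ x ∈ C, (∀ x' : X →L[ℝ] ℝ, (∀ z ∈ C, 0 ≤ x' z) → x' ≠ 0 → 0 < x' x) →
         ∀ y' : Y →L[ℝ] ℝ, (∀ y ∈ D, 0 ≤ y' y) → y' ≠ 0 → 0 < y' (T x)] := by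
  tfae_have 1 → 2
  · rintro ⟨x, hxC, hx⟩ y' hy'pos hy'T
    by_contra hne
    have := hx y' hy'pos hne
    have h0 : y' (T x) = 0 := by
      have := ContinuousLinearMap.ext_iff.mp hy'T x
      simpa using this
    linarith
  tfae_have 2 → 3
  · intro h2 x hxC hxai y' hy'pos hy'ne
    by_cases hcomp : y'.comp T = 0
    · exact absurd (h2 y' hy'pos hcomp) hy'ne
    · have := hxai (y'.comp T) (fun z hz => hy'pos _ (hTpos z hz)) hcomp
      simpa using this
  tfae_have 3 → 1
  · intro h3
    exact ⟨x₀, hx₀C, h3 x₀ hx₀C hx₀ai⟩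
  tfae_finish
end

section
/- Let (X, X_+) and (Y, Y_+) be ordered Banach spaces, let x ∈ X be an almost interior point of X_+, and let T : X → Y be a positive bounded linear operator with dense range. Then Tx is an almost interior point of Y_+. -/
/-- A positive bounded operator `T : X → Y` with dense range between
ordered Banach spaces maps every almost interior point of `X₊` to an almost interior
point of `Y₊`. -/
theorem almost_interior_point_image_of_dense_range
    {X : Type*} [NormedAddCommGroup X] [NormedSpace ℝ X] [CompleteSpace X]
    {Y : Type*} [NormedAddCommGroup Y] [NormedSpace ℝ Y] [CompleteSpace Y]
    (C : Set X) (hCne : C.Nonempty) (hCclosed : IsClosed C)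
    (hCcone : ∀ (a b : ℝ), 0 ≤ a → 0 ≤ b → ∀ x ∈ C, ∀ y ∈ C, a • x + b • y ∈ C)
    (hCpointed : ∀ x ∈ C, -x ∈ C → x = 0)
    (D : Set Y) (hDne : D.Nonempty) (hDclosed : IsClosed D)
    (hDcone : ∀ (a b : ℝ), 0 ≤ a → 0 ≤ b → ∀ x ∈ D, ∀ y ∈ D, a • x + b • y ∈ D)
    (hDpointed : ∀ y ∈ D, -y ∈ D → y = 0)
    (x : X) (hxC : x ∈ C)
    (hxai : ∀ x' : X →L[ℝ] ℝ, (∀ z ∈ C, 0 ≤ x' z) → x' ≠ 0 → 0 < x' x)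
    (T : X →L[ℝ] Y) (hTpos : ∀ z ∈ C, T z ∈ D)
    (hTrange : DenseRange T) :
    T x ∈ D ∧ ∀ y' : Y →L[ℝ] ℝ, (∀ y ∈ D, 0 ≤ y' y) → y' ≠ 0 → 0 < y' (T x) := by
  refine ⟨hTpos x hxC, fun y' hy'pos hy'ne => ?_⟩
  have hcomp : y'.comp T ≠ 0 := by
    intro h
    apply hy'ne
    ext y
    have heq : Set.EqOn (⇑y') (fun _ => (0 : ℝ)) (Set.range T) := by
      rintro _ ⟨z, rfl⟩
      have := congrArg (fun f : X →L[ℝ] ℝ => f z) h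
      simpa using this
    have := Continuous.ext_on hTrange y'.continuous continuous_const heq
    simpa using congrFun this y
  have := hxai (y'.comp T) (fun z hz => hy'pos (T z) (hTpos z hz)) hcomp
  simpa using this
end

section
/- Let (X, X_+) be an ordered Banach space with X_+ ≠ {0} and let (T_t)_{t ∈ [0,∞)} be a positive operator semigroup on X. Let x be a nonzero vector in X_+ and let t₀ > 0 be such that T_{t₀}x is an almost interior point of X_+. Then for every s ∈ [0,∞) the operator T_s maps almost interior points of X_+ to almost interior points of X_+, and T_t x is an almost interior point of X_+ for every t ≥ t₀. -/
/-- Let `(T_t)_{t ∈ [0,∞)}` be a positive operator semigroup on an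
ordered Banach space with nonzero positive cone. If `T_{t₀} x` is an almost interior
point of `X₊` for some nonzero `x ∈ X₊` and some `t₀ > 0`, then each `T_s`, `s ≥ 0`,
maps almost interior points of `X₊` to almost interior points of `X₊`, and `T_t x` is an
almost interior point of `X₊` for all `t ≥ t₀`. -/
theorem semigroup_maps_almost_interior_points
    {X : Type*} [NormedAddCommGroup X] [NormedSpace ℝ X] [CompleteSpace X]
    (C : Set X) (hne : C.Nonempty) (hclosed : IsClosed C)
    (hcone : ∀ (a b : ℝ), 0 ≤ a → 0 ≤ b → ∀ x ∈ C, ∀ y ∈ C, a • x + b • y ∈ C)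
    (hpointed : ∀ x ∈ C, -x ∈ C → x = 0)
    (hCnz : C ≠ {0})
    (T : ℝ → (X →L[ℝ] X))
    (hT0 : T 0 = ContinuousLinearMap.id ℝ X)
    (hTsg : ∀ s t : ℝ, 0 ≤ s → 0 ≤ t → T (s + t) = (T s).comp (T t))
    (hTpos : ∀ t : ℝ, 0 ≤ t → ∀ x ∈ C, T t x ∈ C)
    (x : X) (hxC : x ∈ C) (hxnz : x ≠ 0)
    (t₀ : ℝ) (ht₀ : 0 < t₀)
    (hai : ∀ x' : X →L[ℝ] ℝ, (∀ z ∈ C, 0 ≤ x' z) → x' ≠ 0 → 0 < x' (T t₀ x)) :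
    (∀ s : ℝ, 0 ≤ s → ∀ y ∈ C,
        (∀ x' : X →L[ℝ] ℝ, (∀ z ∈ C, 0 ≤ x' z) → x' ≠ 0 → 0 < x' y) →
        ∀ x' : X →L[ℝ] ℝ, (∀ z ∈ C, 0 ≤ x' z) → x' ≠ 0 → 0 < x' (T s y)) ∧
      (∀ t : ℝ, t₀ ≤ t →
        ∀ x' : X →L[ℝ] ℝ, (∀ z ∈ C, 0 ≤ x' z) → x' ≠ 0 → 0 < x' (T t x)) := by
  -- Iterated composition with `T t₀` stays positive and nonzero.
  have hiter : ∀ k : ℕ, ∀ x' : X →L[ℝ] ℝ, (∀ z ∈ C, 0 ≤ x' z) → x' ≠ 0 →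
      (∀ z ∈ C, 0 ≤ (x'.comp (T ((k : ℝ) * t₀))) z) ∧ x'.comp (T ((k : ℝ) * t₀)) ≠ 0 := by
    intro k
    induction k with
    | zero =>
      intro x' hp hnz
      constructor
      · intro z hz
        simpa [hT0] using hp z hz
      · simpa [hT0] using hnz
    | succ k ih =>
      intro x' hp hnz
      obtain ⟨ihp, ihnz⟩ := ih x' hp hnz
      have hk : (0 : ℝ) ≤ (k : ℝ) * t₀ := by positivity
      have hstep : T (((k : ℕ) + 1 : ℕ) * t₀) = (T ((k : ℝ) * t₀)).comp (T t₀) := by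
        have : (((k : ℕ) + 1 : ℕ) : ℝ) * t₀ = (k : ℝ) * t₀ + t₀ := by push_cast; ring
        rw [this]
        exact hTsg _ _ hk ht₀.le
      have hval : 0 < (x'.comp (T ((k : ℝ) * t₀))) (T t₀ x) := hai _ ihp ihnz
      constructor
      · intro z hz
        have h4 := ihp (T t₀ z) (hTpos t₀ ht₀.le z hz)
        have h5 : T (((k : ℕ) + 1 : ℕ) * t₀) z = T ((k : ℝ) * t₀) (T t₀ z) := by
          rw [hstep]; rfl
        simp only [ContinuousLinearMap.comp_apply] at h4 ⊢
        push_cast at h5 ⊢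
        rw [h5]
        exact h4
      · intro h0
        have : (x'.comp (T (((k : ℕ) + 1 : ℕ) * t₀))) x = 0 := by rw [h0]; rfl
        rw [ContinuousLinearMap.comp_apply, hstep] at this
        simp only [ContinuousLinearMap.comp_apply] at this
        exact hval.ne' this
  -- Key: for every `s ≥ 0`, composition with `T s` is positive and nonzero.
  have key : ∀ s : ℝ, 0 ≤ s → ∀ x' : X →L[ℝ] ℝ, (∀ z ∈ C, 0 ≤ x' z) → x' ≠ 0 →
      (∀ z ∈ C, 0 ≤ (x'.comp (T s)) z) ∧ x'.comp (T s) ≠ 0 := by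
    intro s hs x' hp hnz
    have hposc : ∀ z ∈ C, 0 ≤ (x'.comp (T s)) z := fun z hz => hp _ (hTpos s hs z hz)
    refine ⟨hposc, ?_⟩
    set k : ℕ := ⌊s / t₀⌋₊ with hk
    have hkle : (k : ℝ) * t₀ ≤ s := by
      have h := Nat.floor_le (show (0:ℝ) ≤ s / t₀ from div_nonneg hs ht₀.le)
      calc (k : ℝ) * t₀ ≤ (s / t₀) * t₀ := mul_le_mul_of_nonneg_right h ht₀.le
        _ = s := div_mul_cancel₀ s ht₀.ne'
    have hklt : s < ((k : ℝ) + 1) * t₀ :=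
      (div_lt_iff₀ ht₀).mp (Nat.lt_floor_add_one (s / t₀))
    set r : ℝ := s - (k : ℝ) * t₀ with hr
    have hr0 : 0 ≤ r := by simp [hr, hkle]
    have hrle : r ≤ t₀ := by
      have := hklt.le
      simp only [hr]
      nlinarith
    have hw : T s (T (t₀ - r) x) = T ((k : ℝ) * t₀) (T t₀ x) := by
      have h1 : T (s + (t₀ - r)) = (T s).comp (T (t₀ - r)) :=
        hTsg s (t₀ - r) hs (by linarith)
      have h2 : s + (t₀ - r) = (k : ℝ) * t₀ + t₀ := by simp [hr]; ring
      have h3 : T ((k : ℝ) * t₀ + t₀) = (T ((k : ℝ) * t₀)).comp (T t₀) :=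
        hTsg _ _ (by positivity) ht₀.le
      have := h1.symm.trans (by rw [h2, h3])
      have := congrArg (fun f : X →L[ℝ] X => f x) this
      simpa using this
    obtain ⟨ihp, ihnz⟩ := hiter k x' hp hnz
    have hval : 0 < (x'.comp (T ((k : ℝ) * t₀))) (T t₀ x) := hai _ ihp ihnz
    intro h0
    have : (x'.comp (T s)) (T (t₀ - r) x) = 0 := by rw [h0]; rfl
    rw [ContinuousLinearMap.comp_apply, hw] at this
    exact hval.ne' this
  constructor
  · intro s hs y hyC hy x' hp hnz
    obtain ⟨p, nz⟩ := key s hs x' hp hnz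
    simpa using hy (x'.comp (T s)) p nz
  · intro t ht x' hp hnz
    have h1 : (0 : ℝ) ≤ t - t₀ := by linarith
    obtain ⟨p, nz⟩ := key (t - t₀) h1 x' hp hnz
    have hval : 0 < (x'.comp (T (t - t₀))) (T t₀ x) := hai _ p nz
    have hTt : T t x = T (t - t₀) (T t₀ x) := by
      have h2 : T ((t - t₀) + t₀) = (T (t - t₀)).comp (T t₀) := hTsg _ _ h1 ht₀.le
      have h3 : (t - t₀) + t₀ = t := by ring
      rw [h3] at h2
      rw [h2]; rfl
    rw [hTt]
    simpa using hval
end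

section
/- Let X be a real Banach space, let T be a bounded linear operator on X which is quasi-compact, and let S be a bounded linear operator on X which is power bounded and commutes with T. Then the operator TS is quasi-compact. -/
open Filter Topology

private lemma compact_mul_right {X : Type*} [NormedAddCommGroup X] [NormedSpace ℝ X]
    (A B : X →L[ℝ] X) (hB : IsCompactOperator B) : IsCompactOperator (A * B) := by
  have : ⇑(A * B) = ⇑A ∘ ⇑B := rfl
  rw [this]
  exact hB.continuous_comp A.continuous

private lemma compact_mul_left {X : Type*} [NormedAddCommGroup X] [NormedSpace ℝ X]
    (A B : X →L[ℝ] X) (hA : IsCompactOperator A) : IsCompactOperator (A * B) := by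
  have : ⇑(A * B) = ⇑A ∘ ⇑B := rfl
  rw [this]
  exact hA.comp_clm B

private lemma pow_add_compact {X : Type*} [NormedAddCommGroup X] [NormedSpace ℝ X]
    (K R : X →L[ℝ] X) (hK : IsCompactOperator K) (n : ℕ) :
    ∃ C : X →L[ℝ] X, IsCompactOperator C ∧ (K + R) ^ n = R ^ n + C := by
  induction n with
  | zero => exact ⟨0, isCompactOperator_zero, by simp⟩
  | succ n ih =>
    obtain ⟨C, hC, hCe⟩ := ih
    refine ⟨R ^ n * K + (C * K + C * R), ?_, ?_⟩
    · exact ((compact_mul_right _ _ hK).add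
        ((compact_mul_left C K hC).add (compact_mul_left C R hC)))
    · rw [pow_succ, pow_succ, hCe]
      noncomm_ring

/-- If `T` is quasi-compact and `S` is power bounded and commutes with
`T`, then `T * S` is quasi-compact. -/
theorem quasiCompact_mul_of_powerBounded_commute
    {X : Type*} [NormedAddCommGroup X] [NormedSpace ℝ X] [CompleteSpace X]
    (T S : X →L[ℝ] X)
    (hT : ∃ m : ℕ, 0 < m ∧ ∃ K : X →L[ℝ] X, IsCompactOperator K ∧ ‖T ^ m - K‖ < 1)
    (hS : ∃ M : ℝ, ∀ n : ℕ, ‖S ^ n‖ ≤ M)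
    (hcomm : T * S = S * T) :
    ∃ m : ℕ, 0 < m ∧ ∃ K : X →L[ℝ] X, IsCompactOperator K ∧ ‖(T * S) ^ m - K‖ < 1 := by
  obtain ⟨m, hm, K, hK, hR⟩ := hT
  obtain ⟨M, hM⟩ := hS
  set R : X →L[ℝ] X := T ^ m - K with hRdef
  have hTm : T ^ m = K + R := by rw [hRdef]; abel
  -- choose n with ‖R‖ ^ n * M < 1
  have htend : Tendsto (fun n : ℕ => ‖R‖ ^ n * M) atTop (𝓝 0) := by
    simpa using (tendsto_pow_atTop_nhds_zero_of_lt_one (norm_nonneg R) hR).mul_const M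
  have hev : ∀ᶠ n : ℕ in atTop, ‖R‖ ^ n * M < 1 :=
    (htend.eventually (eventually_lt_nhds (by norm_num : (0:ℝ) < 1)))
  obtain ⟨n, hn1, hnlt⟩ := (hev.and (eventually_ge_atTop 1)).exists
  obtain ⟨C, hC, hCe⟩ := pow_add_compact K R hK n
  refine ⟨m * n, Nat.mul_pos hm hnlt, C * S ^ (m * n), compact_mul_left _ _ hC, ?_⟩
  have hc : Commute T S := hcomm
  have key : (T * S) ^ (m * n) - C * S ^ (m * n) = R ^ n * S ^ (m * n) := by
    rw [hc.mul_pow, pow_mul, hTm, hCe]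
    noncomm_ring
  rw [key]
  calc ‖R ^ n * S ^ (m * n)‖ ≤ ‖R ^ n‖ * ‖S ^ (m * n)‖ := norm_mul_le _ _
    _ ≤ ‖R‖ ^ n * M := by
        exact mul_le_mul (norm_pow_le' R hnlt) (hM _) (norm_nonneg _)
          (pow_nonneg (norm_nonneg _) _)
    _ < 1 := hn1
end

section
/- Let X be a real Banach space and let (T_t)_{t ∈ [0,∞)} be a bounded operator semigroup on X. If T_{t₀} is quasi-compact for some time t₀ ∈ [0,∞), then T_t is quasi-compact for every time t ∈ (0,∞). -/
/-- Let `(T_t)_{t ∈ [0,∞)}` be a bounded operator semigroup on a Banach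
space. If `T_{t₀}` is quasi-compact for some `t₀ ≥ 0`, then `T_t` is quasi-compact for
every `t > 0`. -/
theorem quasiCompact_of_semigroup_member_quasiCompact
    {X : Type*} [NormedAddCommGroup X] [NormedSpace ℝ X] [CompleteSpace X]
    (T : ℝ → (X →L[ℝ] X))
    (hT0 : T 0 = ContinuousLinearMap.id ℝ X)
    (hTsg : ∀ s t : ℝ, 0 ≤ s → 0 ≤ t → T (s + t) = (T s).comp (T t))
    (hbdd : ∃ M : ℝ, ∀ t : ℝ, 0 ≤ t → ‖T t‖ ≤ M)
    (t₀ : ℝ) (ht₀ : 0 ≤ t₀)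
    (hqc : ∃ m : ℕ, 0 < m ∧ ∃ K : X →L[ℝ] X, IsCompactOperator K ∧ ‖T t₀ ^ m - K‖ < 1) :
    ∀ t : ℝ, 0 < t →
      ∃ m : ℕ, 0 < m ∧ ∃ K : X →L[ℝ] X, IsCompactOperator K ∧ ‖T t ^ m - K‖ < 1 := by
  obtain ⟨M, hM⟩ := hbdd
  obtain ⟨m, hm, K, hK, hKlt⟩ := hqc
  -- powers of the semigroup
  have hpow : ∀ s : ℝ, 0 ≤ s → ∀ n : ℕ, T s ^ n = T (n * s) := by
    intro s hs n
    induction n with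
    | zero => simp [hT0]; rfl
    | succ n ih =>
      have h1 : ((n : ℝ) + 1) * s = (n : ℝ) * s + s := by ring
      push_cast
      rw [pow_succ, ih, h1, hTsg ((n : ℝ) * s) s (by positivity) hs]
      rfl
  set s₀ : ℝ := (m : ℝ) * t₀ with hs₀def
  have hs₀ : 0 ≤ s₀ := by positivity
  set A : X →L[ℝ] X := T s₀ with hA
  have hApow : T t₀ ^ m = A := hpow t₀ ht₀ m
  rw [hApow] at hKlt
  set Q : X →L[ℝ] X := A - K with hQ
  have hq : ‖Q‖ < 1 := hKlt
  -- A ^ k = Q ^ k + compact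
  have hAkC : ∀ k : ℕ, ∃ C : X →L[ℝ] X, IsCompactOperator C ∧ A ^ k = Q ^ k + C := by
    intro k
    induction k with
    | zero => exact ⟨0, isCompactOperator_zero, by simp⟩
    | succ k ih =>
      obtain ⟨C, hC, hCk⟩ := ih
      refine ⟨(Q ^ k).comp K + C.comp A, ?_, ?_⟩
      · have h1 : IsCompactOperator ((Q ^ k).comp K) := by
          exact hK.clm_comp (Q ^ k)
        have h2 : IsCompactOperator (C.comp A) := by
          exact hC.comp_clm A
        simpa using h1.add h2
      · have hstep : A ^ (k + 1) = (Q ^ k + C) * A := by rw [← hCk, pow_succ]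
        have hAQ : A = Q + K := by simp [hQ]
        rw [hstep]
        calc (Q ^ k + C) * A = Q ^ k * Q + Q ^ k * K + C * A := by
              rw [hAQ]; noncomm_ring
          _ = Q ^ (k + 1) + ((Q ^ k).comp K + C.comp A) := by
              rw [pow_succ, ← ContinuousLinearMap.mul_def (Q ^ k) K,
                ← ContinuousLinearMap.mul_def C A, add_assoc]
  intro t ht
  have hM0 : 0 ≤ M := le_trans (norm_nonneg _) (hM 0 le_rfl)
  -- choose k ≥ 1 with M * ‖Q‖ ^ k < 1
  obtain ⟨k, hk1, hk⟩ : ∃ k : ℕ, 1 ≤ k ∧ M * ‖Q‖ ^ k < 1 := by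
    rcases eq_or_lt_of_le hM0 with h0 | h0
    · exact ⟨1, le_rfl, by
        rw [← h0]; simp⟩
    · obtain ⟨k, hk⟩ := exists_pow_lt_of_lt_one (one_div_pos.mpr h0) hq
      refine ⟨k + 1, le_add_self, ?_⟩
      have h1 : ‖Q‖ ^ (k + 1) ≤ ‖Q‖ ^ k :=
        pow_le_pow_of_le_one (norm_nonneg _) hq.le (by omega)
      calc M * ‖Q‖ ^ (k + 1) ≤ M * ‖Q‖ ^ k := by
            exact mul_le_mul_of_nonneg_left h1 hM0
        _ < M * (1 / M) := mul_lt_mul_of_pos_left hk h0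
        _ = 1 := by field_simp
  obtain ⟨C, hC, hCk⟩ := hAkC k
  set n : ℕ := ⌈(k * s₀) / t⌉₊ + 1 with hn
  have hnpos : 0 < n := Nat.succ_pos _
  set r : ℝ := n * t - k * s₀ with hr
  have hrn : (k : ℝ) * s₀ / t ≤ n := by
    refine (Nat.le_ceil _).trans ?_
    push_cast [hn]; linarith [Nat.le_ceil ((k : ℝ) * s₀ / t)]
  have hr0 : 0 ≤ r := by
    have := (div_le_iff₀ ht).mp hrn
    simp only [hr]; linarith
  have hks₀ : 0 ≤ (k : ℝ) * s₀ := by positivity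
  -- T t ^ n = T r ∘ A ^ k
  have hdecomp : T t ^ n = (T r) * (Q ^ k) + (T r) * C := by
    have h1 : T t ^ n = T (n * t) := hpow t ht.le n
    have h2 : (n : ℝ) * t = r + (k : ℝ) * s₀ := by simp [hr]
    have h3 : T ((k : ℝ) * s₀) = A ^ k := (hpow s₀ hs₀ k).symm
    rw [h1, h2, hTsg r ((k : ℝ) * s₀) hr0 hks₀, h3, hCk]
    show T r * (Q ^ k + C) = _
    noncomm_ring
  refine ⟨n, hnpos, (T r).comp C, ?_, ?_⟩
  · exact hC.clm_comp (T r)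
  · have heq : T t ^ n - (T r).comp C = (T r) * (Q ^ k) := by
      rw [hdecomp]
      show T r * Q ^ k + T r * C - T r * C = T r * Q ^ k
      abel
    rw [heq]
    calc ‖T r * Q ^ k‖ ≤ ‖T r‖ * ‖Q ^ k‖ := norm_mul_le _ _
      _ ≤ M * ‖Q‖ ^ k := by
          refine mul_le_mul (hM r hr0) ?_ (norm_nonneg _) hM0
          exact norm_pow_le' Q (by omega)
      _ < 1 := hk
end

section
/- Let X be a real Banach space and let T be a bounded linear operator on X which is quasi-compact and power bounded. Then for each x ∈ X the orbit {Tⁿx : n ∈ ℕ₀} is relatively compact in X. -/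
open Metric Set

/-- Decomposition: `(R + K)^k = R^k + (compact)` when `K` is compact. -/
lemma pow_decomp {X : Type*} [NormedAddCommGroup X] [NormedSpace ℝ X]
    (R K : X →L[ℝ] X) (hK : IsCompactOperator K) (k : ℕ) :
    ∃ C : X →L[ℝ] X, IsCompactOperator C ∧ (R + K) ^ k = R ^ k + C := by
  induction k with
  | zero => exact ⟨0, isCompactOperator_zero, by simp⟩
  | succ n ih =>
    obtain ⟨C, hC, hdec⟩ := ih
    refine ⟨R ^ n * K + C * (R + K), ?_, ?_⟩
    · have h1 : IsCompactOperator ⇑(R ^ n * K) := hK.clm_comp (R ^ n)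
      have h2 : IsCompactOperator ⇑(C * (R + K)) := hC.comp_clm (R + K)
      have := h1.add h2
      rwa [← ContinuousLinearMap.coe_add'] at this
    · rw [pow_succ, pow_succ, hdec]
      noncomm_ring

/-- If `T` is a quasi-compact and power bounded operator on a Banach
space `X`, then every orbit `{Tⁿ x : n ∈ ℕ}` is relatively compact in `X`. -/
theorem orbit_relatively_compact_of_quasiCompact_powerBounded
    {X : Type*} [NormedAddCommGroup X] [NormedSpace ℝ X] [CompleteSpace X]
    (T : X →L[ℝ] X)
    (hqc : ∃ m : ℕ, 0 < m ∧ ∃ K : X →L[ℝ] X, IsCompactOperator K ∧ ‖T ^ m - K‖ < 1)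
    (hpb : ∃ M : ℝ, ∀ n : ℕ, ‖T ^ n‖ ≤ M)
    (x : X) :
    IsCompact (closure {y : X | ∃ n : ℕ, y = (T ^ n) x}) := by
  obtain ⟨m, hm, K, hK, hr1⟩ := hqc
  obtain ⟨M, hM⟩ := hpb
  set R : X →L[ℝ] X := T ^ m - K with hR
  set r : ℝ := ‖R‖ with hrdef
  have hr0 : 0 ≤ r := norm_nonneg _
  set B : ℝ := M * ‖x‖ with hB
  have hBb : ∀ n : ℕ, ‖(T ^ n) x‖ ≤ B := fun n =>
    le_trans ((T ^ n).le_opNorm x) (mul_le_mul_of_nonneg_right (hM n) (norm_nonneg x))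
  have hB0 : 0 ≤ B := le_trans (norm_nonneg _) (hBb 0)
  -- suffices total boundedness
  apply TotallyBounded.isCompact_of_isClosed _ isClosed_closure
  apply TotallyBounded.closure
  rw [Metric.totallyBounded_iff]
  intro ε hε
  -- choose k with r^k * B < ε/2
  obtain ⟨k, hk⟩ : ∃ k : ℕ, r ^ k * B < ε / 2 := by
    obtain ⟨n, hn⟩ : ∃ n : ℕ, r ^ n < ε / (2 * (B + 1)) :=
      exists_pow_lt_of_lt_one (by positivity) hr1
    refine ⟨n, ?_⟩
    have h1 : r ^ n * B ≤ r ^ n * (B + 1) :=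
      mul_le_mul_of_nonneg_left (by linarith) (pow_nonneg hr0 n)
    have h2 : r ^ n * (B + 1) < ε / (2 * (B + 1)) * (B + 1) :=
      mul_lt_mul_of_pos_right hn (by positivity)
    have h3 : ε / (2 * (B + 1)) * (B + 1) = ε / 2 := by
      field_simp
    linarith
  -- decomposition
  obtain ⟨C, hC, hdec⟩ := pow_decomp R K hK k
  have hTm : T ^ (m * k) = R ^ k + C := by
    have : R + K = T ^ m := by rw [hR]; abel
    rw [pow_mul, ← this, hdec]
  have hRk : ‖(R : X →L[ℝ] X) ^ k‖ ≤ r ^ k := by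
    cases k with
    | zero => simpa [ContinuousLinearMap.one_def] using ContinuousLinearMap.norm_id_le
    | succ n => exact norm_pow_le' R n.succ_pos
  -- compact image set
  have hcomp : IsCompact (closure ((C : X →ₗ[ℝ] X) '' Metric.closedBall 0 B)) :=
    IsCompactOperator.isCompact_closure_image_of_bounded (𝕜₁ := ℝ)
      (f := (C : X →ₗ[ℝ] X)) hC Metric.isBounded_closedBall
  obtain ⟨t₂, ht₂fin, ht₂⟩ :=
    Metric.totallyBounded_iff.1 hcomp.totallyBounded (ε / 2) (by linarith)
  refine ⟨t₂ ∪ (fun j => (T ^ j) x) '' Set.Iio (m * k),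
    ht₂fin.union ((Set.finite_Iio _).image _), ?_⟩
  rintro z ⟨n, rfl⟩
  by_cases hn : n < m * k
  · exact Set.mem_biUnion (Set.mem_union_right _ ⟨n, hn, rfl⟩) (mem_ball_self hε)
  · push_neg at hn
    set y : X := (T ^ (n - m * k)) x with hy
    have hsplit : (T ^ n) x = (R ^ k) y + C y := by
      have h1 : T ^ n = T ^ (m * k) * T ^ (n - m * k) := by
        rw [← pow_add, Nat.add_sub_cancel' hn]
      rw [h1, hTm]
      rw [ContinuousLinearMap.mul_apply, ContinuousLinearMap.add_apply]
    have hyB : y ∈ Metric.closedBall (0 : X) B := by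
      rw [Metric.mem_closedBall, dist_zero_right]; exact hBb _
    have hCy : C y ∈ closure ((C : X →ₗ[ℝ] X) '' Metric.closedBall 0 B) :=
      subset_closure ⟨y, hyB, rfl⟩
    obtain ⟨w, hw, hwball⟩ := Set.mem_iUnion₂.1 (ht₂ hCy)
    refine Set.mem_biUnion (Set.mem_union_left _ hw) ?_
    have hnear : dist ((T ^ n) x) (C y) < ε / 2 := by
      rw [dist_eq_norm, hsplit, add_sub_cancel_right]
      calc ‖(R ^ k) y‖ ≤ ‖R ^ k‖ * ‖y‖ := (R ^ k).le_opNorm y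
        _ ≤ r ^ k * B :=
          mul_le_mul hRk (hBb _) (norm_nonneg _) (pow_nonneg hr0 _)
        _ < ε / 2 := hk
    have := dist_triangle ((T ^ n) x) (C y) w
    rw [Metric.mem_ball] at hwball ⊢
    linarith
end

section
/- Let X be a real Banach space and let T be a quasi-compact bounded linear operator on X. If the powers Tⁿ converge strongly (i.e., Tⁿx → Px in norm for every x ∈ X) to a bounded linear operator P as n → ∞, then Tⁿ converges to P with respect to the operator norm as n → ∞. -/
open Filter Topology

private lemma aux_rec (a e : ℕ → ℝ) (r C : ℝ) (hr0 : 0 ≤ r) (hr1 : r < 1)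
    (m : ℕ) (hm : 0 < m)
    (ha : ∀ n, 0 ≤ a n) (haC : ∀ n, a n ≤ C)
    (hrec : ∀ n, a (n + m) ≤ e n + r * a n)
    (he : Tendsto e atTop (𝓝 0)) : Tendsto a atTop (𝓝 0) := by
  have hC : 0 ≤ C := le_trans (ha 0) (haC 0)
  rw [Metric.tendsto_atTop]
  intro δ hδ
  obtain ⟨N₁, hN₁⟩ := (Metric.tendsto_atTop.mp he) (δ * (1 - r) / 2) (by nlinarith)
  have hN₁' : ∀ n ≥ N₁, e n ≤ δ * (1 - r) / 2 := by
    intro n hn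
    have h := hN₁ n hn
    rw [Real.dist_eq, sub_zero] at h
    exact (le_abs_self _).trans h.le
  have key : ∀ k : ℕ, ∀ n ≥ N₁, a (n + k * m) ≤ r ^ k * C + δ / 2 := by
    intro k
    induction k with
    | zero => intro n _; simpa using (haC n).trans (by nlinarith)
    | succ k ih =>
      intro n hn
      have h1 : a (n + k * m + m) ≤ e (n + k * m) + r * a (n + k * m) := hrec _
      have h2 : e (n + k * m) ≤ δ * (1 - r) / 2 := hN₁' _ (le_trans hn (Nat.le_add_right _ _))
      have h3 : a (n + k * m) ≤ r ^ k * C + δ / 2 := ih n hn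
      have h4 : r * a (n + k * m) ≤ r * (r ^ k * C + δ / 2) :=
        mul_le_mul_of_nonneg_left h3 hr0
      have heq : n + (k + 1) * m = n + k * m + m := by ring
      rw [heq, pow_succ]
      nlinarith
  have hpow : Tendsto (fun k : ℕ => r ^ k * C) atTop (𝓝 0) := by
    simpa using (tendsto_pow_atTop_nhds_zero_of_lt_one hr0 hr1).mul_const C
  obtain ⟨k₀, hk₀⟩ := (Metric.tendsto_atTop.mp hpow) (δ / 2) (by linarith)
  have hk₀' : r ^ k₀ * C < δ / 2 := by
    have h := hk₀ k₀ le_rfl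
    rw [Real.dist_eq, sub_zero] at h
    exact lt_of_le_of_lt (le_abs_self _) h
  refine ⟨N₁ + k₀ * m, fun n hn => ?_⟩
  rw [Real.dist_eq, sub_zero, abs_of_nonneg (ha n)]
  have h5 : N₁ ≤ n - k₀ * m := by omega
  have h6 : n - k₀ * m + k₀ * m = n := by omega
  have := key k₀ (n - k₀ * m) h5
  rw [h6] at this
  linarith

open Metric in
private lemma aux_compact {X : Type*} [NormedAddCommGroup X] [NormedSpace ℝ X]
    (Q K : X →L[ℝ] X) (hK : IsCompactOperator K) (C : ℝ) (hC0 : 0 ≤ C)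
    (hb : ∀ n : ℕ, ‖Q ^ n‖ ≤ C)
    (hpt : ∀ x : X, Tendsto (fun n : ℕ => (Q ^ n) x) atTop (𝓝 0)) :
    Tendsto (fun n : ℕ => ‖Q ^ n * K‖) atTop (𝓝 0) := by
  rw [Metric.tendsto_atTop]
  intro δ hδ
  obtain ⟨S, hScomp, hSnhds⟩ := hK
  obtain ⟨r, hr, hball⟩ := Metric.mem_nhds_iff.mp hSnhds
  obtain ⟨t, htfin, htcov⟩ := Metric.totallyBounded_iff.mp hScomp.totallyBounded
      (δ * r / (8 * (C + 1))) (by positivity)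
  have hev : ∀ᶠ n : ℕ in atTop, ∀ c ∈ t, ‖(Q ^ n) c‖ ≤ δ * r / 8 := by
    rw [htfin.eventually_all]
    intro c _
    have h := (hpt c).norm
    simp only [norm_zero] at h
    exact h.eventually (eventually_le_nhds (by positivity))
  obtain ⟨N, hN⟩ := eventually_atTop.mp hev
  refine ⟨N, fun n hn => ?_⟩
  rw [Real.dist_eq, sub_zero, abs_of_nonneg (norm_nonneg _)]
  have hle : ‖Q ^ n * K‖ ≤ δ / 2 := by
    apply ContinuousLinearMap.opNorm_le_bound _ (by positivity)
    intro x
    by_cases hx : x = 0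
    · simp [hx]
    have hxn : 0 < ‖x‖ := norm_pos_iff.mpr hx
    set s : ℝ := r / (2 * ‖x‖) with hs
    have hspos : 0 < s := by positivity
    set y := s • x with hy
    have hyn : ‖y‖ = r / 2 := by
      rw [hy, norm_smul, Real.norm_eq_abs, abs_of_pos hspos, hs]
      field_simp
    have hyS : K y ∈ S := hball (mem_ball_zero_iff.mpr (by rw [hyn]; linarith))
    obtain ⟨c, hct, hcball⟩ := Set.mem_iUnion₂.mp (htcov hyS)
    have hdist : ‖K y - c‖ ≤ δ * r / (8 * (C + 1)) := by
      rw [← dist_eq_norm]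
      exact (mem_ball.mp hcball).le
    have h1 : ‖(Q ^ n) (K y)‖ ≤ C * (δ * r / (8 * (C + 1))) + δ * r / 8 := by
      have heq : (Q ^ n) (K y) = (Q ^ n) (K y - c) + (Q ^ n) c := by
        rw [← map_add]; congr 1; abel
      rw [heq]
      refine (norm_add_le _ _).trans (add_le_add ?_ (hN n hn c hct))
      calc ‖(Q ^ n) (K y - c)‖ ≤ ‖Q ^ n‖ * ‖K y - c‖ := (Q ^ n).le_opNorm _
        _ ≤ C * (δ * r / (8 * (C + 1))) :=
          mul_le_mul (hb n) hdist (norm_nonneg _) hC0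
    have hfrac : C * (δ * r / (8 * (C + 1))) ≤ δ * r / 8 := by
      rw [mul_div_assoc', div_le_div_iff₀ (by positivity) (by norm_num)]
      nlinarith [mul_pos hδ hr]
    have h2 : ‖(Q ^ n) (K y)‖ ≤ δ * r / 4 := by linarith
    have h3 : ‖(Q ^ n) (K y)‖ = s * ‖(Q ^ n * K) x‖ := by
      rw [hy, map_smul, map_smul, norm_smul, Real.norm_eq_abs, abs_of_pos hspos]
      rfl
    rw [h3] at h2
    have hAnn : 0 ≤ ‖(Q ^ n * K) x‖ := norm_nonneg _
    -- from s * A ≤ δ r / 4 with s = r/(2‖x‖), conclude A ≤ δ/2 * ‖x‖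
    rw [hs] at h2
    rw [div_mul_eq_mul_div, div_le_div_iff₀ (by positivity) (by norm_num)] at h2
    nlinarith [h2, hr, hxn]
  linarith

/-- If `T` is quasi-compact and the powers `Tⁿ` converge strongly to an
operator `P`, then `Tⁿ → P` in operator norm. -/
theorem uniform_convergence_of_quasiCompact_strong_convergence
    {X : Type*} [NormedAddCommGroup X] [NormedSpace ℝ X] [CompleteSpace X]
    (T P : X →L[ℝ] X)
    (hqc : ∃ m : ℕ, 0 < m ∧ ∃ K : X →L[ℝ] X, IsCompactOperator K ∧ ‖T ^ m - K‖ < 1)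
    (hstrong : ∀ x : X, Tendsto (fun n : ℕ => (T ^ n) x) atTop (nhds (P x))) :
    Tendsto (fun n : ℕ => ‖T ^ n - P‖) atTop (nhds 0) := by
  obtain ⟨m, hm, K, hKc, hKn⟩ := hqc
  -- uniform boundedness of the powers
  have hbdd : ∀ x : X, ∃ C, ∀ n : ℕ, ‖(T ^ n) x‖ ≤ C := by
    intro x
    obtain ⟨C, hC⟩ := (hstrong x).norm.bddAbove_range
    exact ⟨C, fun n => hC (Set.mem_range_self n)⟩
  obtain ⟨M, hM⟩ := banach_steinhaus hbdd
  -- algebraic identities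
  have hTP : T * P = P := by
    ext x
    have h1 : Tendsto (fun n : ℕ => (T ^ (n + 1)) x) atTop (𝓝 (P x)) :=
      (tendsto_add_atTop_iff_nat 1).mpr (hstrong x)
    have h2 : Tendsto (fun n : ℕ => T ((T ^ n) x)) atTop (𝓝 (T (P x))) :=
      (T.continuous.tendsto (P x)).comp (hstrong x)
    have he : (fun n : ℕ => T ((T ^ n) x)) = fun n : ℕ => (T ^ (n + 1)) x := by
      funext n; rw [pow_succ']; rfl
    rw [he] at h2
    exact tendsto_nhds_unique h2 h1
  have hPT : P * T = P := by
    ext x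
    have h1 : Tendsto (fun n : ℕ => (T ^ (n + 1)) x) atTop (𝓝 (P x)) :=
      (tendsto_add_atTop_iff_nat 1).mpr (hstrong x)
    have h2 : (fun n : ℕ => (T ^ (n + 1)) x) = fun n : ℕ => (T ^ n) (T x) := by
      funext n; rw [pow_succ]; rfl
    rw [h2] at h1
    show P (T x) = P x
    exact tendsto_nhds_unique (hstrong (T x)) h1
  have hTnP : ∀ n : ℕ, T ^ n * P = P := by
    intro n
    induction n with
    | zero => simp
    | succ n ih => rw [pow_succ', mul_assoc, ih, hTP]
  have hPP : P * P = P := by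
    ext x
    have h1 : Tendsto (fun n : ℕ => (T ^ n) (P x)) atTop (𝓝 (P (P x))) := hstrong (P x)
    have h2 : (fun n : ℕ => (T ^ n) (P x)) = fun _ : ℕ => P x := by
      funext n
      rw [← ContinuousLinearMap.mul_apply, hTnP]
    rw [h2] at h1
    exact tendsto_nhds_unique h1 tendsto_const_nhds
  set Q := T - P with hQ
  have hQpow : ∀ n : ℕ, 1 ≤ n → Q ^ n = T ^ n - P := by
    intro n hn
    induction n with
    | zero => omega
    | succ n ih =>
      rcases Nat.lt_or_ge n 1 with h | h
      · interval_cases n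
        simp [hQ]
      · have ih' := ih h
        rw [pow_succ, ih', hQ]
        calc (T ^ n - P) * (T - P)
            = T ^ n * T - T ^ n * P - (P * T - P * P) := by
              rw [sub_mul, mul_sub, mul_sub]
          _ = T ^ (n + 1) - P - (P - P) := by rw [hTnP, hPT, hPP, pow_succ]
          _ = T ^ (n + 1) - P := by abel
  have hQP : Q * P = 0 := by rw [hQ, sub_mul, hTP, hPP, sub_self]
  have hQpt : ∀ x : X, Tendsto (fun n : ℕ => (Q ^ n) x) atTop (𝓝 0) := by
    intro x
    rw [← tendsto_add_atTop_iff_nat 1]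
    have h2 : (fun n : ℕ => (Q ^ (n + 1)) x) = fun n : ℕ => (T ^ (n + 1)) x - P x := by
      funext n
      rw [hQpow (n + 1) (by omega)]
      simp
    show Tendsto (fun n : ℕ => (Q ^ (n + 1)) x) atTop (𝓝 0)
    rw [h2]
    have h1 : Tendsto (fun n : ℕ => (T ^ (n + 1)) x) atTop (𝓝 (P x)) :=
      (tendsto_add_atTop_iff_nat 1).mpr (hstrong x)
    simpa using h1.sub_const (P x)
  set C := M + ‖P‖ with hCdef
  have hM1 : ‖(1 : X →L[ℝ] X)‖ ≤ M := by simpa using hM 0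
  have hC0 : 0 ≤ C := add_nonneg ((norm_nonneg _).trans hM1) (norm_nonneg P)
  have hb : ∀ n : ℕ, ‖Q ^ n‖ ≤ C := by
    intro n
    cases n with
    | zero =>
      simp only [pow_zero]
      exact hM1.trans (le_add_of_nonneg_right (norm_nonneg P))
    | succ n =>
      rw [hQpow _ (by omega)]
      calc ‖T ^ (n + 1) - P‖ ≤ ‖T ^ (n + 1)‖ + ‖P‖ := norm_sub_le _ _
        _ ≤ M + ‖P‖ := add_le_add_left (hM _) _
  have hQK : Tendsto (fun n : ℕ => ‖Q ^ n * K‖) atTop (𝓝 0) :=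
    aux_compact Q K hKc C hC0 hb hQpt
  set r := ‖T ^ m - K‖ with hr
  have hrec : ∀ n : ℕ, ‖Q ^ (n + 1 + m)‖ ≤ ‖Q ^ (n + 1) * K‖ + r * ‖Q ^ (n + 1)‖ := by
    intro n
    have hP0 : Q ^ (n + 1) * P = 0 := by rw [pow_succ, mul_assoc, hQP, mul_zero]
    have h1 : Q ^ (n + 1 + m) = Q ^ (n + 1) * K + Q ^ (n + 1) * (T ^ m - K) := by
      rw [pow_add, hQpow m hm, mul_sub, hP0, sub_zero, mul_sub]
      abel
    rw [h1]
    refine (norm_add_le _ _).trans (add_le_add_right ?_ _)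
    rw [mul_comm]
    exact norm_mul_le _ _
  have haux : Tendsto (fun n : ℕ => ‖Q ^ (n + 1)‖) atTop (𝓝 0) := by
    refine aux_rec (fun n => ‖Q ^ (n + 1)‖) (fun n => ‖Q ^ (n + 1) * K‖) r C
      (norm_nonneg _) hKn m hm (fun n => norm_nonneg _) (fun n => hb _) (fun n => ?_)
      ((tendsto_add_atTop_iff_nat 1).mpr hQK)
    have : n + m + 1 = n + 1 + m := by ring
    simpa [this] using hrec n
  rw [← tendsto_add_atTop_iff_nat 1]
  have h3 : (fun n : ℕ => ‖T ^ (n + 1) - P‖) = fun n : ℕ => ‖Q ^ (n + 1)‖ := by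
    funext n; rw [hQpow (n + 1) (by omega)]
  show Tendsto (fun n : ℕ => ‖T ^ (n + 1) - P‖) atTop (𝓝 0)
  rw [h3]
  exact haux
end

section
/- Let (X, X_+) be an ordered Banach space with X_+ ≠ {0} and let (T_t)_{t ∈ [0,∞)} be a positive operator semigroup on X. Assume: (a) for each nonzero x ∈ X_+ there exists a time t_x ∈ [0,∞) such that T_{t_x}x is an almost interior point of X_+; (b) the semigroup is bounded and strongly asymptotically compact. Then there exists a bounded linear operator Q on X such that T_t x → Qx in norm for every x ∈ X as t → ∞; moreover, if Q ≠ 0, then there exist an almost interior point y of X_+ with T_t y = y for all t ≥ 0 and a strictly positive functional y' ∈ X' with T_t' y' = y' for all t ≥ 0 (where T_t' denotes the adjoint of T_t), such that Qz = ⟨y', z⟩ y for all z ∈ X. -/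
open Filter Topology Metric Set

attribute [local instance] Ultrafilter.add Ultrafilter.addSemigroup

/-- Bishop–Phelps style maximal point lemma, proved by Zorn's lemma. -/
theorem bp_exists_maximal {E : Type*} [NormedAddCommGroup E] [NormedSpace ℝ E] [CompleteSpace E]
    (S : Set E) (hS : IsClosed S) (g : E →L[ℝ] ℝ) (bnd : ℝ)
    (hb : ∀ x ∈ S, g x ≤ bnd) {s₀ : E} (hs₀ : s₀ ∈ S) :
    ∃ m ∈ S, dist m s₀ ≤ g m - g s₀ ∧ ∀ v ∈ S, dist v m ≤ g v - g m → v = m := by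
  classical
  set P := {v : E // v ∈ S ∧ dist v s₀ ≤ g v - g s₀} with hP
  have hs₀P : s₀ ∈ S ∧ dist s₀ s₀ ≤ g s₀ - g s₀ := ⟨hs₀, by simp⟩
  let r : P → P → Prop := fun a b => dist (a : E) b ≤ g b - g a
  have hrefl : ∀ a : P, r a a := by intro a; simp [r]
  have htrans : ∀ {a b c : P}, r a b → r b c → r a c := by
    intro a b c h1 h2
    have := dist_triangle (a : E) b c
    simp only [r] at *
    linarith
  have hgmono : ∀ {a b : P}, r a b → g a ≤ g b := by
    intro a b h
    have := dist_nonneg (x := (a : E)) (y := (b : E))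
    simp only [r] at h
    linarith
  have hchain : ∀ c : Set P, IsChain r c → ∀ x ∈ c, ∀ y ∈ c, r x y ∨ r y x := by
    intro c hc x hx y hy
    by_cases hxy : x = y
    · exact Or.inl (hxy ▸ hrefl x)
    · exact hc hx hy hxy
  have hub : ∀ c : Set P, IsChain r c → ∃ ub, ∀ a ∈ c, r a ub := by
    intro c hc
    rcases c.eq_empty_or_nonempty with rfl | ⟨a₀, ha₀⟩
    · exact ⟨⟨s₀, hs₀P⟩, by simp⟩
    -- the sup of g over the chain
    have hne : ((fun a : P => g a) '' c).Nonempty := ⟨g a₀, ⟨a₀, ha₀, rfl⟩⟩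
    have hbdd : BddAbove ((fun a : P => g a) '' c) := by
      refine ⟨bnd, ?_⟩
      rintro _ ⟨a, ha, rfl⟩
      exact hb _ a.2.1
    set γ := sSup ((fun a : P => g a) '' c) with hγ
    have hγle : ∀ a ∈ c, g (a : P).1 ≤ γ := fun a ha => le_csSup hbdd ⟨a, ha, rfl⟩
    have hex : ∀ n : ℕ, ∃ a, a ∈ c ∧ γ - 1 / (n + 1) < g (a : P).1 := by
      intro n
      have h1 : γ - 1 / (n + 1) < γ := by
        have : (0:ℝ) < 1 / (n + 1) := by positivity
        linarith
      obtain ⟨_, ⟨a, ha, rfl⟩, hlt⟩ := exists_lt_of_lt_csSup hne h1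
      exact ⟨a, ha, hlt⟩
    choose a hac hag using hex
    -- monotone resequencing of the aₙ
    let b : ℕ → P := fun n => Nat.rec (a 0) (fun n bn => if r bn (a (n + 1)) then a (n + 1) else bn) n
    have hb0 : b 0 = a 0 := rfl
    have hbsucc : ∀ n, b (n + 1) = if r (b n) (a (n + 1)) then a (n + 1) else b n := fun n => rfl
    have hbc : ∀ n, b n ∈ c := by
      intro n
      induction n with
      | zero => exact hac 0
      | succ n ih =>
        rw [hbsucc]
        split
        · exact hac (n + 1)
        · exact ih
    have hbstep : ∀ n, r (b n) (b (n + 1)) := by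
      intro n
      rw [hbsucc]
      split
      · assumption
      · exact hrefl _
    have hbmono : ∀ n m, n ≤ m → r (b n) (b m) := by
      intro n m h
      induction m with
      | zero =>
        have hn0 : n = 0 := Nat.le_zero.mp h
        subst hn0; exact hrefl _
      | succ m ih =>
        rcases Nat.lt_or_ge n (m + 1) with h' | h'
        · exact htrans (ih (Nat.lt_succ_iff.mp h')) (hbstep m)
        · have : n = m + 1 := le_antisymm h h'
          exact this ▸ hrefl _
    have hbag : ∀ n, g (a n : P).1 ≤ g (b n : P).1 := by
      intro n
      induction n with
      | zero => simp [hb0]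
      | succ n ih =>
        rw [hbsucc]
        split
        · exact le_refl _
        · rename_i hcomp
          rcases hchain c hc _ (hac (n+1)) _ (hbc n) with h | h
          · exact hgmono h
          · exact absurd h hcomp
    have hblow : ∀ n, γ - 1 / (n + 1) < g (b n : P).1 := fun n => lt_of_lt_of_le (hag n) (hbag n)
    have hbup : ∀ n, g (b n : P).1 ≤ γ := fun n => hγle _ (hbc n)
    -- Cauchy
    have hcauchy : CauchySeq (fun n => (b n).1) := by
      apply cauchySeq_of_le_tendsto_0 (b := fun N : ℕ => 1 / (N + 1))
      · intro n m N hn hm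
        rcases le_total n m with h | h
        · have h1 := hbmono n m h
          simp only [r] at h1
          calc dist (b n).1 (b m).1 ≤ g (b m : P).1 - g (b n : P).1 := h1
            _ ≤ γ - (γ - 1/(n+1)) := by have := hblow n; have := hbup m; linarith
            _ = 1/(n+1) := by ring
            _ ≤ 1/(N+1) := by
                apply one_div_le_one_div_of_le (by positivity)
                have : (N:ℝ) ≤ n := Nat.cast_le.mpr hn
                linarith
        · have h1 := hbmono m n h
          simp only [r] at h1
          rw [dist_comm]
          calc dist (b m).1 (b n).1 ≤ g (b n : P).1 - g (b m : P).1 := h1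
            _ ≤ γ - (γ - 1/(m+1)) := by have := hblow m; have := hbup n; linarith
            _ = 1/(m+1) := by ring
            _ ≤ 1/(N+1) := by
                apply one_div_le_one_div_of_le (by positivity)
                have : (N:ℝ) ≤ m := Nat.cast_le.mpr hm
                linarith
      · exact tendsto_one_div_add_atTop_nhds_zero_nat
    obtain ⟨xb, hxb⟩ := cauchySeq_tendsto_of_complete hcauchy
    have hxbS : xb ∈ S := hS.mem_of_tendsto hxb (Eventually.of_forall fun n => (b n).2.1)
    have hxbP : dist xb s₀ ≤ g xb - g s₀ := by
      have hcl : IsClosed {x : E | dist x s₀ ≤ g x - g s₀} :=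
        isClosed_le (by fun_prop) (by fun_prop)
      exact hcl.mem_of_tendsto hxb (Eventually.of_forall fun n => (b n).2.2)
    refine ⟨⟨xb, hxbS, hxbP⟩, ?_⟩
    intro a' ha'
    by_cases hex2 : ∃ n, r a' (b n)
    · obtain ⟨n, hn⟩ := hex2
      have hev : ∀ m, n ≤ m → dist (a' : E) (b m).1 ≤ g (b m : P).1 - g (a' : P).1 :=
        fun m hm => htrans hn (hbmono n m hm)
      have h1 : Tendsto (fun m => dist (a' : E) (b m).1) atTop (𝓝 (dist (a' : E) xb)) :=
        (continuous_const.dist continuous_id).continuousAt.tendsto.comp hxb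
      have h2 : Tendsto (fun m => g (b m : P).1 - g (a' : P).1) atTop (𝓝 (g xb - g (a' : P).1)) :=
        ((g.continuous.tendsto xb).comp hxb).sub tendsto_const_nhds
      exact le_of_tendsto_of_tendsto h1 h2 (eventually_atTop.mpr ⟨n, hev⟩)
    · push_neg at hex2
      have hall : ∀ n, r (b n) a' := by
        intro n
        rcases hchain c hc _ ha' _ (hbc n) with h | h
        · exact absurd h (hex2 n)
        · exact h
      have hlim : Tendsto (fun n => (b n).1) atTop (𝓝 (a' : E)) := by
        have hd : ∀ n : ℕ, dist (b n).1 (a' : E) ≤ 1 / (n + 1) := by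
          intro n
          have h1 := hall n
          simp only [r] at h1
          have h2 := hblow n
          have h3 := hγle _ ha'
          linarith
        have : Tendsto (fun n : ℕ => dist (b n).1 (a' : E)) atTop (𝓝 0) := by
          apply squeeze_zero (fun n => dist_nonneg) hd tendsto_one_div_add_atTop_nhds_zero_nat
        exact tendsto_iff_dist_tendsto_zero.mpr this
      have : (a' : E) = xb := tendsto_nhds_unique hlim hxb
      show dist (a' : E) xb ≤ g xb - g (a' : P).1
      rw [← this]
      simp
  obtain ⟨m, hm⟩ := exists_maximal_of_chains_bounded hub (fun {a b c} => htrans)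
  refine ⟨m.1, m.2.1, by simpa using m.2.2, ?_⟩
  intro v hv hdv
  have hvP : v ∈ S ∧ dist v s₀ ≤ g v - g s₀ := by
    refine ⟨hv, ?_⟩
    have := dist_triangle v (m : E) s₀
    have := m.2.2
    linarith
  have h1 : r m ⟨v, hvP⟩ := by simp only [r]; rwa [dist_comm]
  have h2 := hm _ h1
  simp only [r] at h2
  have hsym : dist ((m : P) : E) v = dist v (m : E) := dist_comm _ _
  have : dist v (m : E) = 0 := by
    linarith [dist_nonneg (x := v) (y := (m : E))]
  exact dist_eq_zero.mp this

/-- Separation producing a positive functional vanishing at a boundary-type point. -/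
theorem cone_sep {E : Type*} [NormedAddCommGroup E] [NormedSpace ℝ E]
    (D : Set E) (hconv : Convex ℝ D) (h0 : (0:E) ∈ D)
    (hsmul : ∀ t : ℝ, 0 < t → ∀ x ∈ D, t • x ∈ D)
    (A : Set E) (hA : IsOpen A) (hAconv : Convex ℝ A) (hAne : A.Nonempty)
    (hdisj : ∀ x ∈ A, x ∉ D)
    (m : E) (hm : m ∈ D) (hmA : m ∈ closure A) :
    ∃ f : E →L[ℝ] ℝ, f ≠ 0 ∧ (∀ v ∈ D, 0 ≤ f v) ∧ f m = 0 := by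
  obtain ⟨f, u, hfA, hfD⟩ :=
    geometric_hahn_banach_open hAconv hA hconv (Set.disjoint_left.mpr hdisj)
  have hu0 : u ≤ 0 := by simpa using hfD 0 h0
  have hpos : ∀ v ∈ D, 0 ≤ f v := by
    intro v hv
    by_contra hneg
    push_neg at hneg
    have ht : 0 < (u - 1) / f v := div_pos_of_neg_of_neg (by linarith) hneg
    have h2 := hfD _ (hsmul _ ht v hv)
    rw [map_smul, smul_eq_mul, div_mul_cancel₀ _ (ne_of_lt hneg)] at h2
    linarith
  have hfm_le : f m ≤ u := by
    have hsub : closure A ⊆ {x | f x ≤ u} :=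
      closure_minimal (fun x hx => le_of_lt (hfA x hx))
        (isClosed_le f.continuous continuous_const)
    exact hsub hmA
  have hfm : f m = 0 := le_antisymm (by linarith) (hpos m hm)
  obtain ⟨a, ha⟩ := hAne
  have hfa : f a < 0 := lt_of_lt_of_le (hfA a ha) hu0
  refine ⟨f, fun h => ?_, hpos, hfm⟩
  rw [h] at hfa
  simp at hfa


/-- An auxiliary convexity fact: sets of the form `{x | ‖x - m‖ < f x - c}` are convex. -/
theorem convex_norm_lt {E : Type*} [NormedAddCommGroup E] [NormedSpace ℝ E]
    (f : E →L[ℝ] ℝ) (m : E) (c : ℝ) : Convex ℝ {x : E | ‖x - m‖ < f x - c} := by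
  intro x hx y hy a b ha hb hab
  simp only [mem_setOf_eq] at hx hy ⊢
  have hm' : a • m + b • m = m := by rw [← add_smul, hab, one_smul]
  have hcomb : a • x + b • y - m = a • (x - m) + b • (y - m) := by
    calc a • x + b • y - m = a • x + b • y - (a • m + b • m) := by rw [hm']
      _ = a • (x - m) + b • (y - m) := by rw [smul_sub, smul_sub]; abel
  have hnorm : ‖a • x + b • y - m‖ ≤ a * ‖x - m‖ + b * ‖y - m‖ := by
    rw [hcomb]
    calc ‖a • (x - m) + b • (y - m)‖ ≤ ‖a • (x - m)‖ + ‖b • (y - m)‖ := norm_add_le _ _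
      _ = a * ‖x - m‖ + b * ‖y - m‖ := by
          rw [norm_smul, norm_smul, Real.norm_eq_abs, Real.norm_eq_abs, abs_of_nonneg ha,
            abs_of_nonneg hb]
  have hfcomb : f (a • x + b • y) - c = a * (f x - c) + b * (f y - c) := by
    have : f (a • x + b • y) = a * f x + b * f y := by
      rw [map_add, map_smul, map_smul]; simp
    rw [this]; linear_combination c * hab
  rcases eq_or_lt_of_le ha with ha' | ha'
  · have ha0 : a = 0 := ha'.symm
    have hb1 : b = 1 := by linarith
    have heq : a • x + b • y = y := by rw [ha0, hb1]; simp
    rw [heq]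
    exact hy
  · have h1 : a * ‖x - m‖ < a * (f x - c) := mul_lt_mul_of_pos_left hx ha'
    have h2 : b * ‖y - m‖ ≤ b * (f y - c) := by
      rcases eq_or_lt_of_le hb with hb' | hb'
      · rw [← hb']; simp
      · exact le_of_lt (mul_lt_mul_of_pos_left hy hb')
    calc ‖a • x + b • y - m‖ ≤ a * ‖x - m‖ + b * ‖y - m‖ := hnorm
      _ < a * (f x - c) + b * (f y - c) := by linarith
      _ = f (a • x + b • y) - c := hfcomb.symm


/-- Every positive functional which is somewhere positive is uniformly positive on a cone all of
whose positive functionals are strictly positive. -/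
theorem cone_unif_pos {E : Type*} [NormedAddCommGroup E] [NormedSpace ℝ E] [CompleteSpace E]
    (D : Set E) (hD : IsClosed D) (hconv : Convex ℝ D) (h0 : (0:E) ∈ D)
    (hsmul : ∀ t : ℝ, 0 < t → ∀ x ∈ D, t • x ∈ D)
    (hstrict : ∀ f : E →L[ℝ] ℝ, (∀ v ∈ D, 0 ≤ f v) → f ≠ 0 → ∀ m ∈ D, f m = 0 → m = 0)
    (f₁ : E →L[ℝ] ℝ) (hf₁ : ∀ v ∈ D, 0 ≤ f₁ v) (w : E) (hw : w ∈ D) (hfw : 0 < f₁ w) :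
    ∃ lam : ℝ, 0 < lam ∧ ∀ v ∈ D, ‖v‖ ≤ lam * f₁ v := by
  set lam := (‖w‖ + 1) / f₁ w with hlamdef
  have hlam : 0 < lam := by positivity
  have hlamfw : lam * f₁ w = ‖w‖ + 1 := div_mul_cancel₀ _ (ne_of_gt hfw)
  refine ⟨lam, hlam, ?_⟩
  intro v hv
  set g : E →L[ℝ] ℝ := -(lam • f₁) with hg
  have hgval : ∀ x : E, g x = -(lam * f₁ x) := by intro x; simp [hg]
  have hgle : ∀ x ∈ D, g x ≤ (0:ℝ) := by
    intro x hx
    rw [hgval]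
    have := hf₁ x hx
    nlinarith
  obtain ⟨m, hmD, hms, hmax⟩ := bp_exists_maximal D hD g 0 hgle hv
  set A : Set E := {x | ‖x - m‖ < g x - g m} with hA
  have hAopen : IsOpen A := by
    have : Continuous fun x : E => ‖x - m‖ := by fun_prop
    exact isOpen_lt this (by fun_prop)
  have hAconv : Convex ℝ A := by
    intro x hx y hy a b ha hb hab
    simp only [hA, mem_setOf_eq] at hx hy ⊢
    have hm' : a • m + b • m = m := by rw [← add_smul, hab, one_smul]
    have hcomb : a • x + b • y - m = a • (x - m) + b • (y - m) := by
      calc a • x + b • y - m = a • x + b • y - (a • m + b • m) := by rw [hm']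
        _ = a • (x - m) + b • (y - m) := by rw [smul_sub, smul_sub]; abel
    have hnorm : ‖a • x + b • y - m‖ ≤ a * ‖x - m‖ + b * ‖y - m‖ := by
      rw [hcomb]
      calc ‖a • (x - m) + b • (y - m)‖ ≤ ‖a • (x - m)‖ + ‖b • (y - m)‖ := norm_add_le _ _
        _ = a * ‖x - m‖ + b * ‖y - m‖ := by
            rw [norm_smul, norm_smul, Real.norm_eq_abs, Real.norm_eq_abs, abs_of_nonneg ha,
              abs_of_nonneg hb]
    have hgcomb : g (a • x + b • y) - g m = a * (g x - g m) + b * (g y - g m) := by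
      have : g (a • x + b • y) = a * g x + b * g y := by
        rw [map_add, map_smul, map_smul]; simp
      rw [this]; linear_combination g m * hab
    rcases eq_or_lt_of_le ha with ha' | ha'
    · have ha0 : a = 0 := ha'.symm
      have hb1 : b = 1 := by linarith
      have heq : a • x + b • y = y := by rw [ha0, hb1]; simp
      rw [heq]
      exact hy
    · have h1 : a * ‖x - m‖ < a * (g x - g m) := by
        exact mul_lt_mul_of_pos_left hx ha'
      have h2 : b * ‖y - m‖ ≤ b * (g y - g m) := by
        rcases eq_or_lt_of_le hb with hb' | hb'
        · rw [← hb']; simp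
        · exact le_of_lt (mul_lt_mul_of_pos_left hy hb')
      calc ‖a • x + b • y - m‖ ≤ a * ‖x - m‖ + b * ‖y - m‖ := hnorm
        _ < a * (g x - g m) + b * (g y - g m) := by linarith
        _ = g (a • x + b • y) - g m := hgcomb.symm
  have hmemA : ∀ t : ℝ, 0 < t → m + t • (-w) ∈ A := by
    intro t ht
    simp only [hA, mem_setOf_eq]
    have h1 : m + t • (-w) - m = t • (-w) := by abel
    have h2 : g (m + t • (-w)) - g m = t * (lam * f₁ w) := by
      rw [map_add, map_smul, map_neg, smul_eq_mul, hgval w]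
      ring
    rw [h1, h2, hlamfw, norm_smul, norm_neg, Real.norm_eq_abs, abs_of_pos ht]
    nlinarith
  have hAne : A.Nonempty := ⟨m + (1:ℝ) • (-w), hmemA 1 one_pos⟩
  have hdisj : ∀ x ∈ A, x ∉ D := by
    intro x hx hxD
    have hle : dist x m ≤ g x - g m := by
      rw [dist_eq_norm]
      exact le_of_lt hx
    have := hmax x hxD hle
    rw [this] at hx
    simp only [hA, mem_setOf_eq, sub_self, norm_zero] at hx
    exact lt_irrefl 0 hx
  have hmA : m ∈ closure A := by
    have hseq : Tendsto (fun n : ℕ => m + (1/(n+1) : ℝ) • (-w)) atTop (𝓝 m) := by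
      have h1 : Tendsto (fun n : ℕ => (1/(n+1) : ℝ)) atTop (𝓝 0) :=
        tendsto_one_div_add_atTop_nhds_zero_nat
      have h2 : Tendsto (fun n : ℕ => (1/(n+1) : ℝ) • (-w)) atTop (𝓝 ((0:ℝ) • (-w))) :=
        h1.smul_const (-w)
      rw [zero_smul] at h2
      simpa using tendsto_const_nhds.add h2
    exact mem_closure_of_tendsto hseq
      (Eventually.of_forall fun n => hmemA _ (by positivity))
  obtain ⟨f, hfne, hfpos, hfm⟩ := cone_sep D hconv h0 hsmul A hAopen hAconv hAne hdisj m hmD hmA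
  have hm0 : m = 0 := hstrict f hfpos hfne m hmD hfm
  rw [hm0, dist_comm, dist_zero_right, map_zero, hgval] at hms
  linarith

set_option maxHeartbeats 1600000 in
/-- On a cone all of whose nonzero positive functionals are strictly positive and admitting a
uniformly positive functional, every continuous functional is a multiple of it:
the dual is one-dimensional. -/
theorem dual_eq_span {E : Type*} [NormedAddCommGroup E] [NormedSpace ℝ E] [CompleteSpace E]
    (D : Set E) (hD : IsClosed D) (hconv : Convex ℝ D) (h0 : (0:E) ∈ D)
    (hsmul : ∀ t : ℝ, 0 < t → ∀ x ∈ D, t • x ∈ D)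
    (hstrict : ∀ f : E →L[ℝ] ℝ, (∀ v ∈ D, 0 ≤ f v) → f ≠ 0 → ∀ m ∈ D, f m = 0 → m = 0)
    (p : E →L[ℝ] ℝ) (hp : ∀ v ∈ D, ‖v‖ ≤ p v) (w : E) (hwD : w ∈ D) (hw : w ≠ 0)
    (h₀ : E →L[ℝ] ℝ) : ∃ t : ℝ, h₀ = t • p := by
  have hpw : 0 < p w := lt_of_lt_of_le (norm_pos_iff.mpr hw) (hp w hwD)
  -- the base of the cone
  set B : Set E := {v | v ∈ D ∧ p v = 1} with hB
  have hBclosed : IsClosed B := hD.inter (isClosed_eq p.continuous continuous_const)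
  have hBconv : Convex ℝ B := by
    intro x hx y hy a b ha hb hab
    refine ⟨hconv hx.1 hy.1 ha hb hab, ?_⟩
    have : p (a • x + b • y) = a * p x + b * p y := by
      rw [map_add, map_smul, map_smul]; simp
    rw [this, hx.2, hy.2]; linarith
  have hBmem : ∀ v ∈ D, v ≠ 0 → (p v)⁻¹ • v ∈ B := by
    intro v hv hvne
    have hpv : 0 < p v := lt_of_lt_of_le (norm_pos_iff.mpr hvne) (hp v hv)
    refine ⟨hsmul _ (inv_pos.mpr hpv) v hv, ?_⟩
    rw [map_smul, smul_eq_mul, inv_mul_cancel₀ (ne_of_gt hpv)]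
  have hw'B : (p w)⁻¹ • w ∈ B := hBmem w hwD hw
  -- the per-ε sign lemma
  have key : ∀ ε : ℝ, 0 < ε → ε < ‖h₀‖ →
      ∃ c : ℝ, c ≠ 0 ∧ ∀ x : E, ε * ‖x‖ ≤ h₀ x → c * p x ≤ 0 := by
    intro ε hε hεlt
    -- find k₀ with ε ‖k₀‖ < h₀ k₀
    obtain ⟨k₀, hk₀⟩ : ∃ k₀ : E, ε * ‖k₀‖ < h₀ k₀ := by
      by_contra hcon
      push_neg at hcon
      have : ‖h₀‖ ≤ ε := by
        apply h₀.opNorm_le_bound (le_of_lt hε)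
        intro x
        rw [Real.norm_eq_abs, abs_le]
        constructor
        · have := hcon (-x)
          rw [map_neg, norm_neg] at this
          linarith
        · exact le_trans (hcon x) (le_refl _)
      linarith
    -- Zorn maximal point on the base
    have hgb : ∀ x ∈ B, (ε⁻¹ • h₀ : E →L[ℝ] ℝ) x ≤ ε⁻¹ * ‖h₀‖ := by
      intro x hx
      have h1 : h₀ x ≤ ‖h₀‖ * ‖x‖ := le_trans (le_abs_self _) (h₀.le_opNorm x)
      have h2 : ‖x‖ ≤ 1 := by
        have := hp x hx.1
        rw [hx.2] at this
        linarith [this]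
      have h3 : h₀ x ≤ ‖h₀‖ := le_trans h1 (by nlinarith [norm_nonneg h₀])
      have : (ε⁻¹ • h₀ : E →L[ℝ] ℝ) x = ε⁻¹ * h₀ x := by simp
      rw [this]
      have hεinv : 0 < ε⁻¹ := inv_pos.mpr hε
      nlinarith
    obtain ⟨m, hmB, hms, hmax⟩ := bp_exists_maximal B hBclosed (ε⁻¹ • h₀) (ε⁻¹ * ‖h₀‖) hgb hw'B
    -- the open cone A around m
    set A : Set E := {x | ‖x - m‖ < (ε⁻¹ • h₀ : E →L[ℝ] ℝ) x - ε⁻¹ * h₀ m} with hA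
    have hAval : ∀ x : E, x ∈ A ↔ ε * ‖x - m‖ < h₀ x - h₀ m := by
      intro x
      simp only [hA, mem_setOf_eq, ContinuousLinearMap.smul_apply, smul_eq_mul]
      constructor
      · intro h
        have := (mul_lt_mul_iff_right₀ hε).mpr h
        rw [mul_sub, ← mul_assoc, ← mul_assoc, mul_inv_cancel₀ (ne_of_gt hε), one_mul, one_mul]
          at this
        exact this
      · intro h
        have := (mul_lt_mul_iff_right₀ (inv_pos.mpr hε)).mpr h
        rw [mul_sub, ← mul_assoc, inv_mul_cancel₀ (ne_of_gt hε), one_mul] at this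
        exact this
    have hAopen : IsOpen A := by
      have : Continuous fun x : E => ‖x - m‖ := by fun_prop
      exact isOpen_lt this (by fun_prop)
    have hAconv : Convex ℝ A := convex_norm_lt (ε⁻¹ • h₀) m (ε⁻¹ * h₀ m)
    have hmemA : ∀ t : ℝ, 0 < t → m + t • k₀ ∈ A := by
      intro t ht
      rw [hAval]
      have h1 : m + t • k₀ - m = t • k₀ := by abel
      have h2 : h₀ (m + t • k₀) - h₀ m = t * h₀ k₀ := by
        rw [map_add, map_smul, smul_eq_mul]; ring
      rw [h1, h2, norm_smul, Real.norm_eq_abs, abs_of_pos ht]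
      nlinarith
    have hAne : A.Nonempty := ⟨m + (1:ℝ) • k₀, hmemA 1 one_pos⟩
    have hdisjB : ∀ x ∈ A, x ∉ B := by
      intro x hx hxB
      have hle : dist x m ≤ (ε⁻¹ • h₀ : E →L[ℝ] ℝ) x - (ε⁻¹ • h₀ : E →L[ℝ] ℝ) m := by
        rw [dist_eq_norm]
        simp only [hA, mem_setOf_eq] at hx
        simp only [ContinuousLinearMap.smul_apply, smul_eq_mul]
        exact le_of_lt hx
      have := hmax x hxB hle
      rw [this] at hx
      simp only [hA, mem_setOf_eq, sub_self, norm_zero, ContinuousLinearMap.smul_apply,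
        smul_eq_mul] at hx
      linarith
    have hmA : m ∈ closure A := by
      have hseq : Tendsto (fun n : ℕ => m + (1/(n+1) : ℝ) • k₀) atTop (𝓝 m) := by
        have h1 : Tendsto (fun n : ℕ => (1/(n+1) : ℝ)) atTop (𝓝 0) :=
          tendsto_one_div_add_atTop_nhds_zero_nat
        have h2 : Tendsto (fun n : ℕ => (1/(n+1) : ℝ) • k₀) atTop (𝓝 ((0:ℝ) • k₀)) :=
          h1.smul_const k₀
        rw [zero_smul] at h2
        simpa using tendsto_const_nhds.add h2
      exact mem_closure_of_tendsto hseq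
        (Eventually.of_forall fun n => hmemA _ (by positivity))
    obtain ⟨φ, u, hφA, hφB⟩ :=
      geometric_hahn_banach_open hAconv hAopen hBconv (Set.disjoint_left.mpr hdisjB)
    have hφm_le : φ m ≤ u := by
      have hsub : closure A ⊆ {x | φ x ≤ u} :=
        closure_minimal (fun x hx => le_of_lt (hφA x hx))
          (isClosed_le φ.continuous continuous_const)
      exact hsub hmA
    have hφm : φ m = u := le_antisymm hφm_le (hφB m hmB)
    -- ψ := φ - φ(m) • p vanishes
    set ψ : E →L[ℝ] ℝ := φ - (φ m) • p with hψ
    have hψval : ∀ x, ψ x = φ x - φ m * p x := by intro x; simp [hψ]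
    have hψpos : ∀ v ∈ D, 0 ≤ ψ v := by
      intro v hv
      rcases eq_or_ne v 0 with rfl | hvne
      · simp [hψval]
      · have hpv : 0 < p v := lt_of_lt_of_le (norm_pos_iff.mpr hvne) (hp v hv)
        have h1 : u ≤ φ ((p v)⁻¹ • v) := hφB _ (hBmem v hv hvne)
        rw [map_smul, smul_eq_mul] at h1
        rw [← hφm] at h1
        have h2 : p v * φ m ≤ p v * ((p v)⁻¹ * φ v) :=
          mul_le_mul_of_nonneg_left h1 (le_of_lt hpv)
        rw [← mul_assoc, mul_inv_cancel₀ (ne_of_gt hpv), one_mul] at h2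
        rw [hψval]
        linarith
    have hψm : ψ m = 0 := by
      rw [hψval, hmB.2]; ring
    have hmne : m ≠ 0 := by
      intro h
      have := hmB.2
      rw [h, map_zero] at this
      exact one_ne_zero this.symm
    have hψ0 : ψ = 0 := by
      by_contra hψne
      exact hmne (hstrict ψ hψpos hψne m hmB.1 hψm)
    have hφp : ∀ x, φ x = φ m * p x := by
      intro x
      have : ψ x = 0 := by rw [hψ0]; simp
      rw [hψval] at this
      linarith
    have hcne : φ m ≠ 0 := by
      intro hc
      have h1 : φ (m + (1:ℝ) • k₀) < u := hφA _ (hmemA 1 one_pos)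
      have h2 : u ≤ φ ((p w)⁻¹ • w) := hφB _ hw'B
      rw [hφp, hc, zero_mul] at h1
      rw [hφp, hc, zero_mul] at h2
      linarith
    refine ⟨φ m, hcne, ?_⟩
    -- the sign property
    have hstrictsign : ∀ k : E, ε * ‖k‖ < h₀ k → φ m * p k < 0 := by
      intro k hk
      have hmem : m + k ∈ A := by
        rw [hAval]
        have h1 : m + k - m = k := by abel
        have h2 : h₀ (m + k) - h₀ m = h₀ k := by rw [map_add]; ring
        rw [h1, h2]
        exact hk
      have h1 : φ (m + k) < u := hφA _ hmem
      rw [map_add, hφm] at h1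
      have h2 : φ k < 0 := by linarith
      rw [hφp] at h2
      exact h2
    intro x hx
    by_contra hcon
    push_neg at hcon
    -- approximate: x + δ k₀ satisfies the strict inequality
    set q := φ m * p k₀ with hq
    have hδ : ∀ δ : ℝ, 0 < δ → φ m * p x + δ * q < 0 := by
      intro δ hδ
      have hmem : ε * ‖x + δ • k₀‖ < h₀ (x + δ • k₀) := by
        calc ε * ‖x + δ • k₀‖ ≤ ε * (‖x‖ + δ * ‖k₀‖) := by
              have := norm_add_le x (δ • k₀)
              rw [norm_smul, Real.norm_eq_abs, abs_of_pos hδ] at this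
              nlinarith
          _ = ε * ‖x‖ + δ * (ε * ‖k₀‖) := by ring
          _ < h₀ x + δ * h₀ k₀ := by nlinarith
          _ = h₀ (x + δ • k₀) := by rw [map_add, map_smul, smul_eq_mul]
      have := hstrictsign _ hmem
      rw [map_add, map_smul, smul_eq_mul] at this
      nlinarith
    -- contradiction with φ m * p x > 0
    have h : 0 < φ m * p x := hcon
    set δ := min 1 ((φ m * p x) / (|q| + 1)) with hδdef
    have hδpos : 0 < δ := lt_min one_pos (div_pos h (by positivity))
    have hd := hδ δ hδpos
    have h1 : δ * |q| ≤ (φ m * p x) / (|q| + 1) * |q| :=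
      mul_le_mul_of_nonneg_right (min_le_right _ _) (abs_nonneg q)
    have h2 : (φ m * p x) / (|q| + 1) * |q| < φ m * p x := by
      rw [div_mul_eq_mul_div, div_lt_iff₀ (by positivity)]
      nlinarith [abs_nonneg q]
    have h3 := mul_le_mul_of_nonneg_left (neg_abs_le q) hδpos.le
    have h4 : δ * -|q| = -(δ * |q|) := by ring
    linarith
  -- extract a uniform sign
  rcases eq_or_ne h₀ 0 with rfl | hne
  · exact ⟨0, by simp⟩
  have hn0 : 0 < ‖h₀‖ := norm_pos_iff.mpr hne
  have hεn : ∀ n : ℕ, 0 < ‖h₀‖ / (n + 2) ∧ ‖h₀‖ / (n + 2) < ‖h₀‖ := by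
    intro n
    constructor
    · positivity
    · rw [div_lt_iff₀ (by positivity)]
      nlinarith [hn0]
  choose c hcne hcsign using fun n : ℕ => key (‖h₀‖ / (n + 2)) (hεn n).1 (hεn n).2
  have hsign : ∃ s : ℝ, s ≠ 0 ∧ ∀ x : E, 0 < h₀ x → 0 ≤ s * p x := by
    by_cases hinf : {n : ℕ | 0 < c n}.Infinite
    · refine ⟨-1, by norm_num, ?_⟩
      intro x hx
      have hxne : x ≠ 0 := by
        intro h
        rw [h, map_zero] at hx
        exact lt_irrefl 0 hx
      obtain ⟨N, hN, hNgt⟩ := hinf.exists_gt ⌈‖h₀‖ * ‖x‖ / h₀ x⌉₊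
      have hle : ‖h₀‖ / (N + 2) * ‖x‖ ≤ h₀ x := by
        have h1 : ‖h₀‖ * ‖x‖ / h₀ x ≤ ⌈‖h₀‖ * ‖x‖ / h₀ x⌉₊ := Nat.le_ceil _
        have h2 : (⌈‖h₀‖ * ‖x‖ / h₀ x⌉₊ : ℝ) < N := by exact_mod_cast hNgt
        have h3 : ‖h₀‖ * ‖x‖ / h₀ x < N + 2 := by linarith
        rw [div_mul_eq_mul_div, div_le_iff₀ (by positivity)]
        rw [div_lt_iff₀ hx] at h3
        nlinarith
      have := hcsign N x hle
      have hcN : 0 < c N := hN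
      nlinarith
    · refine ⟨1, one_ne_zero, ?_⟩
      intro x hx
      have hxne : x ≠ 0 := by
        intro h
        rw [h, map_zero] at hx
        exact lt_irrefl 0 hx
      have hinf' : {n : ℕ | c n < 0}.Infinite := by
        have hsub : {n : ℕ | 0 < c n}ᶜ ⊆ {n : ℕ | c n < 0} := by
          intro n hn
          simp only [mem_compl_iff, mem_setOf_eq, not_lt] at hn
          exact lt_of_le_of_ne hn (hcne n)
        exact ((Set.not_infinite.mp hinf).infinite_compl).mono hsub
      obtain ⟨N, hN, hNgt⟩ := hinf'.exists_gt ⌈‖h₀‖ * ‖x‖ / h₀ x⌉₊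
      have hle : ‖h₀‖ / (N + 2) * ‖x‖ ≤ h₀ x := by
        have h1 : ‖h₀‖ * ‖x‖ / h₀ x ≤ ⌈‖h₀‖ * ‖x‖ / h₀ x⌉₊ := Nat.le_ceil _
        have h2 : (⌈‖h₀‖ * ‖x‖ / h₀ x⌉₊ : ℝ) < N := by exact_mod_cast hNgt
        have h3 : ‖h₀‖ * ‖x‖ / h₀ x < N + 2 := by linarith
        rw [div_mul_eq_mul_div, div_le_iff₀ (by positivity)]
        rw [div_lt_iff₀ hx] at h3
        nlinarith
      have := hcsign N x hle
      have hcN : c N < 0 := hN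
      nlinarith
  obtain ⟨s, hsne, hs⟩ := hsign
  obtain ⟨z, hz⟩ : ∃ z, h₀ z ≠ 0 := by
    by_contra hcon
    push_neg at hcon
    exact hne (ContinuousLinearMap.ext fun x => by rw [hcon x]; simp)
  obtain ⟨x₀, hx₀⟩ : ∃ x₀, 0 < h₀ x₀ := by
    rcases lt_or_gt_of_ne hz with h | h
    · exact ⟨-z, by rwa [map_neg, neg_pos]⟩
    · exact ⟨z, h⟩
  have hker : ∀ z', h₀ z' = 0 → p z' = 0 := by
    intro z' hz'
    have hall : ∀ t : ℝ, 0 ≤ s * p x₀ + t * (s * p z') := by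
      intro t
      have h1 : 0 < h₀ (x₀ + t • z') := by
        rw [map_add, map_smul, smul_eq_mul, hz', mul_zero, add_zero]
        exact hx₀
      have := hs _ h1
      rw [map_add, map_smul, smul_eq_mul] at this
      nlinarith
    by_contra hcon
    have hne' : s * p z' ≠ 0 := fun h => hcon (by
      rcases mul_eq_zero.mp h with h' | h'
      · exact absurd h' hsne
      · exact h')
    have := hall (-(s * p x₀ + 1) / (s * p z'))
    rw [div_mul_cancel₀ _ hne'] at this
    linarith
  have hpx₀ : p x₀ ≠ 0 := by
    intro h
    have hp0 : ∀ y, p y = 0 := by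
      intro y
      have h1 : h₀ (y - (h₀ y / h₀ x₀) • x₀) = 0 := by
        rw [map_sub, map_smul, smul_eq_mul, div_mul_cancel₀ _ (ne_of_gt hx₀)]
        ring
      have h2 := hker _ h1
      rw [map_sub, map_smul, smul_eq_mul, h] at h2
      linarith
    have := hp0 w
    linarith
  refine ⟨h₀ x₀ / p x₀, ?_⟩
  ext y
  have h1 : h₀ (y - (h₀ y / h₀ x₀) • x₀) = 0 := by
    rw [map_sub, map_smul, smul_eq_mul, div_mul_cancel₀ _ (ne_of_gt hx₀)]
    ring
  have h2 := hker _ h1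
  rw [map_sub, map_smul, smul_eq_mul] at h2
  have h3 : p y = h₀ y / h₀ x₀ * p x₀ := by linarith
  simp only [ContinuousLinearMap.smul_apply, smul_eq_mul]
  rw [h3]
  field_simp

/-- There exists an idempotent ultrafilter on `ℝ` extending `atTop`. -/
theorem exists_idem_ultrafilter_atTop :
    ∃ U : Ultrafilter ℝ, (↑U : Filter ℝ) ≤ atTop ∧ U + U = U := by
  set s : Set (Ultrafilter ℝ) := {U | (↑U : Filter ℝ) ≤ atTop} with hs
  have hne : s.Nonempty := by
    obtain ⟨U, hU⟩ := Ultrafilter.exists_le (atTop : Filter ℝ)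
    exact ⟨U, hU⟩
  have hiff : ∀ U : Ultrafilter ℝ, (↑U : Filter ℝ) ≤ atTop ↔ ∀ a : ℝ, Ici a ∈ U := by
    intro U
    constructor
    · exact fun h a => h (Ici_mem_atTop a)
    · intro h A hA
      obtain ⟨a, ha⟩ := mem_atTop_sets.mp hA
      exact Filter.mem_of_superset (h a) (fun b hb => ha b hb)
  have hclosed : IsClosed s := by
    have : s = ⋂ (a : ℝ), {U : Ultrafilter ℝ | Ici a ∈ U} := by
      ext U
      simp only [hs, mem_setOf_eq, mem_iInter, hiff]
    rw [this]
    exact isClosed_iInter (fun a => ultrafilter_isClosed_basic _)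
  have hadd : ∀ U ∈ s, ∀ V ∈ s, U + V ∈ s := by
    intro U hU V hV
    rw [hs, mem_setOf_eq, hiff]
    intro a
    have : ∀ᶠ m in ↑U, ∀ᶠ m' in ↑V, m + m' ∈ Ici a := by
      apply Eventually.of_forall
      intro m
      have h1 : Ici (a - m) ∈ ↑V := hV (Ici_mem_atTop _)
      filter_upwards [h1] with m' hm'
      simp only [mem_Ici] at hm' ⊢
      linarith
    exact (Ultrafilter.eventually_add U V (· ∈ Ici a)).mpr this
  obtain ⟨U, hUs, hUidem⟩ := exists_idempotent_in_compact_add_subsemigroup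
    (Ultrafilter.continuous_add_left) s hne hclosed.isCompact hadd
  exact ⟨U, hUs, hUidem⟩

theorem vanish_on_submodule {E : Type*} [NormedAddCommGroup E] [NormedSpace ℝ E]
    (V : Submodule ℝ E) (f : E →L[ℝ] ℝ) (u : ℝ) (h : ∀ a ∈ V, f a < u) :
    ∀ a ∈ V, f a = 0 := by
  intro a ha
  by_contra hfa
  have := h _ (V.smul_mem ((u+1)/f a) ha)
  rw [map_smul, smul_eq_mul, div_mul_cancel₀ _ hfa] at this
  have h0 : f 0 < u := h 0 V.zero_mem
  rw [map_zero] at h0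
  linarith


set_option maxHeartbeats 4000000

/-- Strong convergence of strongly positive semigroups. Let
`(T_t)_{t ∈ [0,∞)}` be a positive operator semigroup on an ordered Banach space with
nonzero cone such that (a) the orbit of every nonzero positive vector reaches an almost
interior point of the cone, and (b) the semigroup is bounded and strongly asymptotically
compact. Then `T_t` converges strongly to some operator `Q` as `t → ∞`; if `Q ≠ 0`, then
`Q = y' ⊗ y` for an almost interior point `y` of the cone fixed by the semigroup and a
strictly positive functional `y'` fixed by the adjoint semigroup. -/
theorem strong_convergence_of_strongly_positive_semigroup
    {X : Type*} [NormedAddCommGroup X] [NormedSpace ℝ X] [CompleteSpace X]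
    (C : Set X) (hne : C.Nonempty) (hclosed : IsClosed C)
    (hcone : ∀ (a b : ℝ), 0 ≤ a → 0 ≤ b → ∀ x ∈ C, ∀ y ∈ C, a • x + b • y ∈ C)
    (hpointed : ∀ x ∈ C, -x ∈ C → x = 0)
    (hCnz : C ≠ {0})
    (T : ℝ → (X →L[ℝ] X))
    (hT0 : T 0 = ContinuousLinearMap.id ℝ X)
    (hTsg : ∀ s t : ℝ, 0 ≤ s → 0 ≤ t → T (s + t) = (T s).comp (T t))
    (hTpos : ∀ t : ℝ, 0 ≤ t → ∀ x ∈ C, T t x ∈ C)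
    (hstrpos : ∀ x ∈ C, x ≠ 0 → ∃ tx : ℝ, 0 ≤ tx ∧
      ∀ x' : X →L[ℝ] ℝ, (∀ z ∈ C, 0 ≤ x' z) → x' ≠ 0 → 0 < x' (T tx x))
    (hbdd : ∃ M : ℝ, ∀ t : ℝ, 0 ≤ t → ‖T t‖ ≤ M)
    (hsac : ∀ x : X, ∀ t : ℕ → ℝ, (∀ n, 0 ≤ t n) → Tendsto t atTop atTop →
      ∃ φ : ℕ → ℕ, StrictMono φ ∧ ∃ y : X,
        Tendsto (fun n => T (t (φ n)) x) atTop (nhds y)) :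
    ∃ Q : X →L[ℝ] X,
      (∀ x : X, Tendsto (fun t : ℝ => T t x) atTop (nhds (Q x))) ∧
      (Q ≠ 0 →
        ∃ (y : X) (y' : X →L[ℝ] ℝ),
          (y ∈ C ∧ (∀ x' : X →L[ℝ] ℝ, (∀ z ∈ C, 0 ≤ x' z) → x' ≠ 0 → 0 < x' y) ∧
            ∀ t : ℝ, 0 ≤ t → T t y = y) ∧
          ((∀ z ∈ C, z ≠ 0 → 0 < y' z) ∧ ∀ t : ℝ, 0 ≤ t → y'.comp (T t) = y') ∧
          (∀ z : X, Q z = y' z • y)) := by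
  classical
  obtain ⟨M₀, hM₀⟩ := hbdd
  set M' : ℝ := max M₀ 1 with hM'def
  have hM1 : (1:ℝ) ≤ M' := le_max_right _ _
  have hM'pos : (0:ℝ) < M' := lt_of_lt_of_le one_pos hM1
  have hTnorm : ∀ t : ℝ, 0 ≤ t → ∀ x : X, ‖T t x‖ ≤ M' * ‖x‖ := by
    intro t ht x
    calc ‖T t x‖ ≤ ‖T t‖ * ‖x‖ := (T t).le_opNorm x
      _ ≤ M' * ‖x‖ := by
          have h1 := hM₀ t ht
          have h2 : ‖T t‖ ≤ M' := le_trans h1 (le_max_left _ _)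
          exact mul_le_mul_of_nonneg_right h2 (norm_nonneg x)
  -- the omega limit set
  set om : X → Set X := fun x => {y | ∃ u : ℕ → ℝ, (∀ n, 0 ≤ u n) ∧ Tendsto u atTop atTop ∧
    Tendsto (fun n => T (u n) x) atTop (𝓝 y)} with hom
  have hom_ne : ∀ x : X, (om x).Nonempty := by
    intro x
    obtain ⟨φ, hφ, y, hy⟩ := hsac x (fun n => (n : ℝ)) (fun n => Nat.cast_nonneg n)
      tendsto_natCast_atTop_atTop
    exact ⟨y, fun n => ((φ n : ℕ) : ℝ), fun n => Nat.cast_nonneg _,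
      tendsto_natCast_atTop_atTop.comp hφ.tendsto_atTop, hy⟩
  have hom_cpt : ∀ x : X, IsCompact (om x) := by
    intro x
    apply IsSeqCompact.isCompact
    intro y hy
    -- choose times sₖ ≥ k with dist (T (s k) x) (y k) < 1/(k+1)
    have hsel : ∀ k : ℕ, ∃ s : ℝ, (k:ℝ) ≤ s ∧ dist (T s x) (y k) < 1/(k+1) := by
      intro k
      obtain ⟨u, hu0, huT, huL⟩ := hy k
      have h1 : ∀ᶠ n in atTop, dist (T (u n) x) (y k) < 1/(k+1) :=
        Metric.tendsto_nhds.mp huL _ (by positivity)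
      have h2 : ∀ᶠ n in atTop, (k:ℝ) ≤ u n := huT.eventually_ge_atTop _
      obtain ⟨n, hn1, hn2⟩ := (h1.and h2).exists
      exact ⟨u n, hn2, hn1⟩
    choose s hs1 hs2 using hsel
    have hs0 : ∀ k, 0 ≤ s k := fun k => le_trans (Nat.cast_nonneg k) (hs1 k)
    have hsT : Tendsto s atTop atTop := tendsto_atTop_mono hs1 tendsto_natCast_atTop_atTop
    obtain ⟨φ, hφ, z, hz⟩ := hsac x s hs0 hsT
    refine ⟨z, ?_, φ, hφ, ?_⟩
    · exact ⟨s ∘ φ, fun n => hs0 _, hsT.comp hφ.tendsto_atTop, hz⟩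
    · -- y (φ k) → z
      have hd : ∀ k, dist (y (φ k)) z ≤ 1/(φ k + 1) + dist (T (s (φ k)) x) z := by
        intro k
        calc dist (y (φ k)) z ≤ dist (y (φ k)) (T (s (φ k)) x) + dist (T (s (φ k)) x) z :=
              dist_triangle _ _ _
          _ ≤ 1/(φ k + 1) + dist (T (s (φ k)) x) z := by
              have := hs2 (φ k)
              rw [dist_comm]
              linarith
      have h1 : Tendsto (fun k => 1/((φ k : ℝ) + 1) + dist (T (s (φ k)) x) z) atTop (𝓝 0) := by
        have ha : Tendsto (fun k => 1/((φ k : ℝ) + 1)) atTop (𝓝 0) :=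
          tendsto_one_div_add_atTop_nhds_zero_nat.comp hφ.tendsto_atTop
        have hb : Tendsto (fun k => dist (T (s (φ k)) x) z) atTop (𝓝 0) :=
          tendsto_iff_dist_tendsto_zero.mp hz
        simpa using ha.add hb
      have h2 : Tendsto (fun k => dist (y (φ k)) z) atTop (𝓝 0) :=
        squeeze_zero (fun k => dist_nonneg) hd h1
      exact tendsto_iff_dist_tendsto_zero.mpr h2
  have hdist0 : ∀ x : X, Tendsto (fun t => infDist (T t x) (om x)) atTop (𝓝 0) := by
    intro x
    by_contra hcon
    rw [Metric.tendsto_nhds] at hcon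
    push_neg at hcon
    obtain ⟨ε, hε, hfreq⟩ := hcon
    have hfa := Filter.frequently_atTop.mp hfreq
    choose u hu1 hu2 using fun n : ℕ => hfa n
    have hu0 : ∀ n, (0:ℝ) ≤ u n := fun n => le_trans (Nat.cast_nonneg n) (hu1 n)
    have huT : Tendsto u atTop atTop := tendsto_atTop_mono hu1 tendsto_natCast_atTop_atTop
    obtain ⟨φ, hφ, z, hz⟩ := hsac x u hu0 huT
    have hzom : z ∈ om x := ⟨u ∘ φ, fun n => hu0 _, huT.comp hφ.tendsto_atTop, hz⟩
    have h1 : Tendsto (fun n => infDist (T (u (φ n)) x) (om x)) atTop (𝓝 (infDist z (om x))) :=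
      ((continuous_infDist_pt (om x)).tendsto z).comp hz
    have h2 : infDist z (om x) = 0 := infDist_zero_of_mem hzom
    have h3 : ε ≤ infDist z (om x) := by
      apply ge_of_tendsto h1
      apply Eventually.of_forall
      intro n
      have := hu2 (φ n)
      rw [Real.dist_eq, sub_zero] at this
      have hnn : 0 ≤ infDist (T (u (φ n)) x) (om x) := infDist_nonneg
      rw [abs_of_nonneg hnn] at this
      linarith [this]
    rw [h2] at h3
    linarith
  -- idempotent ultrafilter
  obtain ⟨U, hUle, hUidem⟩ := exists_idem_ultrafilter_atTop
  -- the shifted limit operators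
  have hSL : ∀ τ : ℝ, ∃ S : X →L[ℝ] X, ∀ x, Tendsto (fun t => T (t - τ) x) ↑U (𝓝 (S x)) := by
    intro τ
    have hlim : ∀ x : X, ∃ y : X, Tendsto (fun t => T (t - τ) x) ↑U (𝓝 y) := by
      intro x
      have hshift : Tendsto (fun t : ℝ => t - τ) atTop atTop :=
        tendsto_atTop_add_const_right atTop (-τ) tendsto_id
      have hd : Tendsto (fun t => infDist (T (t - τ) x) (om x)) atTop (𝓝 0) :=
        (hdist0 x).comp hshift
      have hsel : ∀ t : ℝ, ∃ p, p ∈ om x ∧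
          dist (T (t - τ) x) p < infDist (T (t - τ) x) (om x) + 1/(1 + |t|) := by
        intro t
        have h1 : infDist (T (t - τ) x) (om x) < infDist (T (t - τ) x) (om x) + 1/(1 + |t|) := by
          have : (0:ℝ) < 1/(1 + |t|) := by positivity
          linarith
        obtain ⟨p, hp1, hp2⟩ := (Metric.infDist_lt_iff (hom_ne x)).mp h1
        exact ⟨p, hp1, hp2⟩
      choose pf hpmem hpd using hsel
      have hmap : ↑(U.map pf) ≤ 𝓟 (om x) := by
        rw [Filter.le_principal_iff]
        rw [Ultrafilter.mem_coe]
        rw [Ultrafilter.mem_map]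
        exact Filter.univ_mem' (fun t => hpmem t)
      obtain ⟨y, hymem, hy⟩ := (hom_cpt x).ultrafilter_le_nhds (U.map pf) hmap
      refine ⟨y, ?_⟩
      have hpf : Tendsto pf ↑U (𝓝 y) := hy
      have hdz : Tendsto (fun t => dist (T (t - τ) x) (pf t)) atTop (𝓝 0) := by
        apply squeeze_zero (fun t => dist_nonneg) (fun t => le_of_lt (hpd t))
        have h1 : Tendsto (fun t : ℝ => 1/(1 + |t|)) atTop (𝓝 0) := by
          have h2 : Tendsto (fun t : ℝ => 1 + |t|) atTop atTop :=
            tendsto_atTop_add_const_left _ _ tendsto_abs_atTop_atTop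
          simpa [one_div, Function.comp_def] using tendsto_inv_atTop_zero.comp h2
        simpa using hd.add h1
      have hdzU : Tendsto (fun t => dist (T (t - τ) x) (pf t)) ↑U (𝓝 0) :=
        hdz.mono_left hUle
      rw [tendsto_iff_dist_tendsto_zero]
      apply squeeze_zero (fun t => dist_nonneg)
        (fun t => dist_triangle (T (t - τ) x) (pf t) y)
      have h2 : Tendsto (fun t => dist (pf t) y) ↑U (𝓝 0) :=
        tendsto_iff_dist_tendsto_zero.mp hpf
      simpa using hdzU.add h2
    choose Sf hSf using hlim
    have hadd : ∀ x y : X, Sf (x + y) = Sf x + Sf y := by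
      intro x y
      refine tendsto_nhds_unique ?_ ((hSf x).add (hSf y))
      apply (hSf (x + y)).congr
      intro t
      rw [map_add]
    have hsmul : ∀ (c : ℝ) (x : X), Sf (c • x) = c • Sf x := by
      intro c x
      refine tendsto_nhds_unique ?_ ((hSf x).const_smul c)
      apply (hSf (c • x)).congr
      intro t
      rw [map_smul]
    have hbound : ∀ x : X, ‖Sf x‖ ≤ M' * ‖x‖ := by
      intro x
      have hcl : IsClosed {z : X | ‖z‖ ≤ M' * ‖x‖} := isClosed_le (by fun_prop) (by fun_prop)
      apply hcl.mem_of_tendsto (hSf x)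
      have hev : Ici τ ∈ (↑U : Filter ℝ) := hUle (Ici_mem_atTop τ)
      filter_upwards [hev] with t ht
      exact hTnorm (t - τ) (by simp only [mem_Ici] at ht; linarith) x
    refine ⟨LinearMap.mkContinuous
      { toFun := Sf, map_add' := hadd, map_smul' := hsmul } M' hbound, fun x => hSf x⟩
  choose SL hSLspec using hSL
  set e : X →L[ℝ] X := SL 0 with he_def
  have he : ∀ x, Tendsto (fun t => T t x) ↑U (𝓝 (e x)) := by
    intro x
    have := hSLspec 0 x
    simpa using this
  have huniq : ∀ {f : ℝ → X} {a b : X}, Tendsto f ↑U (𝓝 a) → Tendsto f ↑U (𝓝 b) → a = b :=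
    fun hfa hfb => tendsto_nhds_unique hfa hfb
  -- positivity of the limit operators
  have hSpos : ∀ (τ : ℝ) (x : X), x ∈ C → SL τ x ∈ C := by
    intro τ x hx
    apply hclosed.mem_of_tendsto (hSLspec τ x)
    filter_upwards [hUle (Ici_mem_atTop τ)] with t ht
    exact hTpos (t - τ) (by simp only [mem_Ici] at ht; linarith) x hx
  have hepos : ∀ x ∈ C, e x ∈ C := fun x hx => hSpos 0 x hx
  -- commutation with the semigroup
  have hecomm : ∀ τ : ℝ, 0 ≤ τ → ∀ x : X, T τ (e x) = e (T τ x) := by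
    intro τ hτ x
    have h1 : Tendsto (fun t => T τ (T t x)) ↑U (𝓝 (T τ (e x))) :=
      ((T τ).continuous.tendsto (e x)).comp (he x)
    have h2 : Tendsto (fun t => T t (T τ x)) ↑U (𝓝 (e (T τ x))) := he (T τ x)
    refine huniq h1 (h2.congr' ?_)
    filter_upwards [hUle (Ici_mem_atTop (0:ℝ))] with t ht
    have ht0 : 0 ≤ t := ht
    have ha : T (t + τ) = (T t).comp (T τ) := hTsg t τ ht0 hτ
    have hb : T (τ + t) = (T τ).comp (T t) := hTsg τ t hτ ht0
    calc T t (T τ x) = T (t + τ) x := by rw [ha]; rfl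
      _ = T (τ + t) x := by rw [add_comm]
      _ = T τ (T t x) := by rw [hb]; rfl
  -- idempotency
  have hidem : ∀ x : X, e (e x) = e x := by
    intro x
    refine huniq (he (e x)) ?_
    rw [Metric.tendsto_nhds]
    intro ε hε
    have hball : {r : ℝ | dist (T r x) (e x) < ε/2} ∈ (↑U : Filter ℝ) := by
      have := Metric.tendsto_nhds.mp (he x) (ε/2) (by positivity)
      exact this
    have h2 : {r : ℝ | dist (T r x) (e x) < ε/2} ∈ (↑(U + U) : Filter ℝ) := by
      rw [hUidem]; exact hball
    have h3 : ∀ᶠ s in ↑U, ∀ᶠ t in ↑U, dist (T (s + t) x) (e x) < ε/2 :=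
      (Ultrafilter.eventually_add U U (fun r => dist (T r x) (e x) < ε/2)).mp h2
    filter_upwards [h3, hUle (Ici_mem_atTop (0:ℝ))] with s hs hs0
    have hs0' : (0:ℝ) ≤ s := hs0
    have hTs : Tendsto (fun t => T (s + t) x) ↑U (𝓝 (T s (e x))) := by
      have h4 : Tendsto (fun t => T s (T t x)) ↑U (𝓝 (T s (e x))) :=
        ((T s).continuous.tendsto (e x)).comp (he x)
      refine h4.congr' ?_
      filter_upwards [hUle (Ici_mem_atTop (0:ℝ))] with t ht
      have : T (s + t) = (T s).comp (T t) := hTsg s t hs0' ht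
      rw [this]; rfl
    have hmem : T s (e x) ∈ closedBall (e x) (ε/2) := by
      apply (Metric.isClosed_closedBall : IsClosed (closedBall (e x) (ε/2))).mem_of_tendsto hTs
      filter_upwards [hs] with t ht
      exact mem_closedBall.mpr (le_of_lt ht)
    have := mem_closedBall.mp hmem
    calc dist (T s (e x)) (e x) ≤ ε/2 := this
      _ < ε := by linarith
  -- shifted operators invert the semigroup up to e
  have hSTe : ∀ τ : ℝ, 0 ≤ τ → ∀ x : X, SL τ (T τ x) = e x := by
    intro τ hτ x
    refine huniq (hSLspec τ (T τ x)) ((he x).congr' ?_)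
    filter_upwards [hUle (Ici_mem_atTop τ)] with t ht
    have ht' : τ ≤ t := ht
    have : T ((t - τ) + τ) = (T (t - τ)).comp (T τ) := hTsg (t - τ) τ (by linarith) hτ
    rw [sub_add_cancel] at this
    rw [this]; rfl
  -- extraction of sequences from ultrafilter limits
  have hclu : ∀ (f : ℝ → X) (y : X), Tendsto f ↑U (𝓝 y) → ∃ u : ℕ → ℝ,
      (∀ n, 0 ≤ u n) ∧ Tendsto u atTop atTop ∧ Tendsto (fun n => f (u n)) atTop (𝓝 y) := by
    intro f y hf
    have hsets : ∀ n : ℕ, ∃ t : ℝ, dist (f t) y < 1/(n+1) ∧ (n:ℝ) ≤ t := by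
      intro n
      have h1 : {t | dist (f t) y < 1/(n+1)} ∈ (↑U : Filter ℝ) :=
        Metric.tendsto_nhds.mp hf _ (by positivity)
      have h2 : Ici (n:ℝ) ∈ (↑U : Filter ℝ) := hUle (Ici_mem_atTop _)
      obtain ⟨t, ht1, ht2⟩ := Ultrafilter.nonempty_of_mem (Filter.inter_mem h1 h2)
      exact ⟨t, ht1, ht2⟩
    choose u hu1 hu2 using hsets
    refine ⟨u, fun n => le_trans (Nat.cast_nonneg n) (hu2 n), 
      tendsto_atTop_mono hu2 tendsto_natCast_atTop_atTop, ?_⟩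
    rw [tendsto_iff_dist_tendsto_zero]
    apply squeeze_zero (fun n => dist_nonneg) (fun n => le_of_lt (hu1 n))
    exact tendsto_one_div_add_atTop_nhds_zero_nat
  -- flight vectors tend to zero
  have homsub : ∀ (x : X), (∀ y ∈ om x, y = (0:X)) → Tendsto (fun t => T t x) atTop (𝓝 0) := by
    intro x homx
    by_contra hcon
    rw [Metric.tendsto_nhds] at hcon
    push_neg at hcon
    obtain ⟨ε, hε, hfreq⟩ := hcon
    have hfa := Filter.frequently_atTop.mp hfreq
    choose u hu1 hu2 using fun n : ℕ => hfa n
    have hu0 : ∀ n, (0:ℝ) ≤ u n := fun n => le_trans (Nat.cast_nonneg n) (hu1 n)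
    have huT : Tendsto u atTop atTop := tendsto_atTop_mono hu1 tendsto_natCast_atTop_atTop
    obtain ⟨φ, hφ, z, hz⟩ := hsac x u hu0 huT
    have hzom : z ∈ om x := ⟨u ∘ φ, fun n => hu0 _, huT.comp hφ.tendsto_atTop, hz⟩
    have hz0 : z = 0 := homx z hzom
    have h1 : Tendsto (fun n => dist (T (u (φ n)) x) 0) atTop (𝓝 (dist z 0)) :=
      (continuous_id.dist continuous_const).continuousAt.tendsto.comp hz
    have h2 : ε ≤ dist z 0 := by
      apply ge_of_tendsto h1
      exact Eventually.of_forall (fun n => hu2 (φ n))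
    rw [hz0, dist_self] at h2
    linarith
  have hflight : ∀ x : X, Tendsto (fun t => T t (x - e x)) atTop (𝓝 0) := by
    intro x
    set w := x - e x with hw
    have hew : e w = 0 := by
      rw [hw, map_sub, hidem, sub_self]
    apply homsub w
    intro y hy
    obtain ⟨u, hu0, huT, huL⟩ := hy
    -- some sequence along which the orbit of w goes to 0
    have h0T : Tendsto (fun t => T t w) ↑U (𝓝 0) := by
      have := he w
      rwa [hew] at this
    obtain ⟨s, hs0, hsT, hsL⟩ := hclu (fun t => T t w) 0 h0T
    have hyle : ∀ ε : ℝ, 0 < ε → ‖y‖ ≤ ε := by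
      intro ε hε
      have hex : ∃ m : ℕ, ‖T (s m) w‖ < ε / M' := by
        have h1 : Tendsto (fun m => ‖T (s m) w‖) atTop (𝓝 0) := by
          have := hsL.norm
          simpa using this
        have := Metric.tendsto_nhds.mp h1 (ε / M') (by positivity)
        obtain ⟨m, hm⟩ := this.exists
        rw [Real.dist_eq, sub_zero, abs_of_nonneg (norm_nonneg _)] at hm
        exact ⟨m, hm⟩
      obtain ⟨m, hm⟩ := hex
      have hev : ∀ᶠ n in atTop, ‖T (u n) w‖ ≤ ε := by
        filter_upwards [huT.eventually_ge_atTop (s m)] with n hn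
        have heq : T (u n) w = T (u n - s m) (T (s m) w) := by
          have h2 : T ((u n - s m) + s m) = (T (u n - s m)).comp (T (s m)) :=
            hTsg _ _ (by linarith) (hs0 m)
          rw [sub_add_cancel] at h2
          rw [h2]; rfl
        rw [heq]
        calc ‖T (u n - s m) (T (s m) w)‖ ≤ M' * ‖T (s m) w‖ := hTnorm _ (by linarith) _
          _ ≤ M' * (ε / M') := mul_le_mul_of_nonneg_left (le_of_lt hm) (le_of_lt hM'pos)
          _ = ε := by field_simp
      have hnormlim : Tendsto (fun n => ‖T (u n) w‖) atTop (𝓝 ‖y‖) := huL.norm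
      exact le_of_tendsto hnormlim hev
    have : ‖y‖ ≤ 0 := by
      by_contra hy0
      push_neg at hy0
      have := hyle (‖y‖/2) (by linarith)
      linarith
    simpa using norm_le_zero_iff.mp this
  -- basic positivity facts
  have h0C : (0:X) ∈ C := by
    obtain ⟨c, hc⟩ := hne
    have := hcone 0 0 le_rfl le_rfl c hc c hc
    simpa using this
  have hcex : ∃ c, c ∈ C ∧ c ≠ 0 := by
    by_contra h
    push_neg at h
    apply hCnz
    apply Set.Subset.antisymm
    · intro c hc
      rw [mem_singleton_iff]
      exact h c hc
    · intro c hc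
      rw [mem_singleton_iff] at hc
      rw [hc]
      exact h0C
  have hCconv : Convex ℝ C := by
    intro x hx y hy a b ha hb hab
    exact hcone a b ha hb x hx y hy
  have hx₀' : ∃ x' : X →L[ℝ] ℝ, (∀ z ∈ C, 0 ≤ x' z) ∧ x' ≠ 0 := by
    obtain ⟨c, hcC, hcne⟩ := hcex
    have hnc : -c ∉ C := by
      intro h
      exact hcne (hpointed c hcC h)
    obtain ⟨f, u, hfC, hfc⟩ := geometric_hahn_banach_closed_point hCconv hclosed hnc
    have hu : 0 < u := by
      have := hfC 0 h0C
      rwa [map_zero] at this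
    have hnonpos : ∀ z ∈ C, f z ≤ 0 := by
      intro z hz
      by_contra hpos
      push_neg at hpos
      have hzmem : ((u+1)/f z) • z ∈ C := by
        have := hcone ((u+1)/f z) 0 (by positivity) le_rfl z hz z hz
        simpa using this
      have := hfC _ hzmem
      rw [map_smul, smul_eq_mul, div_mul_cancel₀ _ (ne_of_gt hpos)] at this
      linarith
    refine ⟨-f, ?_, ?_⟩
    · intro z hz
      have := hnonpos z hz
      simp only [ContinuousLinearMap.neg_apply]
      linarith
    · intro h0
      have hf0 : f = 0 := by
        have : - -f = -(0 : X →L[ℝ] ℝ) := by rw [h0]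
        simpa using this
      rw [hf0] at hfc
      simp at hfc
      linarith
  obtain ⟨x₀', hx₀pos, hx₀ne⟩ := hx₀'
  -- density of the span of C
  have hspan : ∀ (g : X →L[ℝ] X), (∀ c ∈ C, g c = 0) → g = 0 := by
    intro g hg
    set V := (Submodule.span ℝ C).topologicalClosure with hV
    have hCV : C ⊆ (V : Set X) := fun c hc =>
      Submodule.le_topologicalClosure _ (Submodule.subset_span hc)
    have hVtop : V = ⊤ := by
      by_contra hne'
      obtain ⟨z, hz⟩ : ∃ z, z ∉ V := by
        by_contra h
        push_neg at h
        exact hne' (Submodule.eq_top_iff'.mpr h)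
      have hVconv : Convex ℝ (V : Set X) := fun x hx y hy a b ha hb hab =>
        V.add_mem (V.smul_mem a hx) (V.smul_mem b hy)
      obtain ⟨f, u, hfV, hfz⟩ := geometric_hahn_banach_closed_point hVconv
        (Submodule.isClosed_topologicalClosure _) hz
      have hf0 := vanish_on_submodule V f u hfV
      have hfC : ∀ z' ∈ C, 0 ≤ f z' := fun z' hz' => le_of_eq (hf0 z' (hCV hz')).symm
      have hfne : f ≠ 0 := by
        intro h
        rw [h] at hfz
        have := hfV 0 V.zero_mem
        simp at hfz this
        linarith
      obtain ⟨c, hcC, hcne⟩ := hcex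
      obtain ⟨τ, hτ, hAI⟩ := hstrpos c hcC hcne
      have h1 := hAI f hfC hfne
      have h2 : f (T τ c) = 0 := hf0 _ (hCV (hTpos τ hτ c hcC))
      linarith
    ext x
    have hx : x ∈ V := by rw [hVtop]; exact Submodule.mem_top
    have hsp : Submodule.span ℝ C ≤ LinearMap.ker (g : X →ₗ[ℝ] X) :=
      Submodule.span_le.mpr (fun c hc => LinearMap.mem_ker.mpr (hg c hc))
    have hcl : V ≤ LinearMap.ker (g : X →ₗ[ℝ] X) :=
      Submodule.topologicalClosure_minimal _ hsp (ContinuousLinearMap.isClosed_ker g)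
    have := LinearMap.mem_ker.mp (hcl hx)
    simpa using this
  -- MAIN CASE SPLIT
  rcases eq_or_ne e 0 with heq | heq
  · refine ⟨e, ?_, ?_⟩
    · intro x
      have h1 := hflight x
      rw [heq] at h1 ⊢
      simpa using h1
    · intro hQ
      exact absurd heq hQ
  -- e ≠ 0 : the positivity endgame
  obtain ⟨c₀, hc₀C, hc₀ne⟩ : ∃ c₀, c₀ ∈ C ∧ e c₀ ≠ 0 := by
    by_contra h
    push_neg at h
    exact heq (hspan e h)
  set v₀ := e c₀ with hv₀def
  have hv₀C : v₀ ∈ C := hepos c₀ hc₀C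
  have hv₀fix : e v₀ = v₀ := hidem c₀
  obtain ⟨τ₀, hτ₀, hAI₀⟩ := hstrpos v₀ hv₀C hc₀ne
  set u₀ := T τ₀ v₀ with hu₀def
  have hu₀C : u₀ ∈ C := hTpos τ₀ hτ₀ v₀ hv₀C
  have hu₀fix : e u₀ = u₀ := by
    calc e (T τ₀ v₀) = T τ₀ (e v₀) := (hecomm τ₀ hτ₀ v₀).symm
      _ = T τ₀ v₀ := by rw [hv₀fix]
  have hu₀ne : u₀ ≠ 0 := by
    intro h
    have h1 := hAI₀ x₀' hx₀pos hx₀ne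
    rw [h] at h1
    simp at h1
  have hxe : ∀ x' : X →L[ℝ] ℝ, (∀ z ∈ C, 0 ≤ x' z) → x' ≠ 0 → x'.comp e ≠ 0 := by
    intro x' hpos hne' h0
    have h1 : x' (e u₀) = 0 := by
      have : (x'.comp e) u₀ = 0 := by rw [h0]; rfl
      simpa using this
    rw [hu₀fix] at h1
    have h2 := hAI₀ x' hpos hne'
    linarith
  have hClaimA : ∀ v, v ∈ C → e v = v → v ≠ 0 →
      ∀ x' : X →L[ℝ] ℝ, (∀ z ∈ C, 0 ≤ x' z) → x' ≠ 0 → 0 < x' v := by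
    intro v hvC hvfix hvne x' hpos hne'
    obtain ⟨τ, hτ, hAI⟩ := hstrpos v hvC hvne
    have hSv : SL τ (T τ v) = v := by rw [hSTe τ hτ v, hvfix]
    have hcomp_pos : ∀ z ∈ C, 0 ≤ (x'.comp (SL τ)) z := fun z hz => hpos _ (hSpos τ z hz)
    have hcomp_ne : x'.comp (SL τ) ≠ 0 := by
      intro h0
      apply hxe x' hpos hne'
      ext z
      have h1 : (x'.comp (SL τ)) (T τ z) = 0 := by rw [h0]; rfl
      have h2 : x' (SL τ (T τ z)) = 0 := h1
      rw [hSTe τ hτ z] at h2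
      simpa using h2
    have h3 := hAI (x'.comp (SL τ)) hcomp_pos hcomp_ne
    have h4 : (x'.comp (SL τ)) (T τ v) = x' v := by
      have : x' (SL τ (T τ v)) = x' v := by rw [hSv]
      exact this
    rwa [h4] at h3
  -- the fixed subspace
  set Ks : Submodule ℝ X := LinearMap.ker ((ContinuousLinearMap.id ℝ X - e : X →L[ℝ] X) : X →ₗ[ℝ] X) with hKs
  have hKmem : ∀ x : X, x ∈ Ks ↔ e x = x := by
    intro x
    rw [hKs, LinearMap.mem_ker]
    constructor
    · intro h
      have : x - e x = 0 := by
        have h2 : ((ContinuousLinearMap.id ℝ X - e : X →L[ℝ] X) : X →ₗ[ℝ] X) x = x - e x := rfl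
        rw [← h2, h]
      have := sub_eq_zero.mp this
      exact this.symm
    · intro h
      show x - e x = 0
      rw [h, sub_self]
  have hKclosed : IsClosed (Ks : Set X) := ContinuousLinearMap.isClosed_ker _
  haveI : CompleteSpace Ks := hKclosed.completeSpace_coe
  set eK : X →L[ℝ] Ks := e.codRestrict Ks (fun x => (hKmem (e x)).mpr (hidem x)) with heK
  have heKcoe : ∀ x : X, ((eK x : Ks) : X) = e x := fun x => rfl
  set DK : Set Ks := {v | (v : X) ∈ C} with hDK
  have hDKclosed : IsClosed DK := hclosed.preimage continuous_subtype_val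
  have hDKconv : Convex ℝ DK := by
    intro x hx y hy a b ha hb hab
    show ((a • x + b • y : Ks) : X) ∈ C
    push_cast
    exact hcone a b ha hb _ hx _ hy
  have hDK0 : (0 : Ks) ∈ DK := by
    show ((0 : Ks) : X) ∈ C
    simpa using h0C
  have hDKsmul : ∀ t : ℝ, 0 < t → ∀ x ∈ DK, t • x ∈ DK := by
    intro t ht x hx
    show ((t • x : Ks) : X) ∈ C
    push_cast
    have := hcone t 0 ht.le le_rfl _ hx _ hx
    simpa using this
  set u₀s : Ks := ⟨u₀, (hKmem u₀).mpr hu₀fix⟩ with hu₀s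
  have hu₀sDK : u₀s ∈ DK := hu₀C
  have hu₀sne : u₀s ≠ 0 := by
    intro h
    apply hu₀ne
    have : ((u₀s : Ks) : X) = ((0 : Ks) : X) := by rw [h]
    simpa [hu₀s] using this
  have hKfix : ∀ z : Ks, e (z : X) = (z : X) := fun z => (hKmem _).mp z.2
  have heKK : ∀ z : Ks, eK (z : X) = z := by
    intro z
    apply Subtype.ext
    rw [heKcoe]
    exact hKfix z
  have hstrictK : ∀ f : Ks →L[ℝ] ℝ, (∀ v ∈ DK, 0 ≤ f v) → f ≠ 0 → ∀ m ∈ DK, f m = 0 → m = 0 := by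
    intro f hfpos hfne m hmDK hfm
    by_contra hmne
    set x' : X →L[ℝ] ℝ := f.comp eK with hx'
    have hx'pos : ∀ z ∈ C, 0 ≤ x' z := by
      intro z hz
      apply hfpos (eK z)
      show ((eK z : Ks) : X) ∈ C
      rw [heKcoe]
      exact hepos z hz
    have hx'ne : x' ≠ 0 := by
      obtain ⟨z, hz⟩ : ∃ z : Ks, f z ≠ 0 := by
        by_contra h
        push_neg at h
        exact hfne (ContinuousLinearMap.ext h)
      intro h0
      apply hz
      have h1 : x' (z : X) = 0 := by rw [h0]; rfl
      rw [hx'] at h1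
      have h2 : f (eK (z : X)) = 0 := h1
      rwa [heKK z] at h2
    have h1 : e (↑m) = ↑m := hKfix m
    have h2 : (↑m : X) ≠ 0 := by
      intro h
      apply hmne
      apply Subtype.ext
      simpa using h
    have h3 := hClaimA (↑m) hmDK h1 h2 x' hx'pos hx'ne
    have h4 : x' ↑m = f m := by
      rw [hx']
      have : f (eK (↑m : X)) = f m := by rw [heKK m]
      exact this
    rw [h4, hfm] at h3
    exact lt_irrefl 0 h3
  -- the base functional
  set f₁ : Ks →L[ℝ] ℝ := x₀'.comp Ks.subtypeL with hf₁
  have hf₁pos : ∀ v ∈ DK, 0 ≤ f₁ v := fun v hv => hx₀pos _ hv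
  have hf₁u₀ : 0 < f₁ u₀s := by
    have := hAI₀ x₀' hx₀pos hx₀ne
    exact this
  obtain ⟨lam, hlam, hlamle⟩ := cone_unif_pos DK hDKclosed hDKconv hDK0 hDKsmul hstrictK
    f₁ hf₁pos u₀s hu₀sDK hf₁u₀
  set p : Ks →L[ℝ] ℝ := lam • f₁ with hpdef
  have hp : ∀ v ∈ DK, ‖v‖ ≤ p v := by
    intro v hv
    have := hlamle v hv
    simpa [hpdef] using this
  have hdual := dual_eq_span DK hDKclosed hDKconv hDK0 hDKsmul hstrictK p hp u₀s hu₀sDK hu₀sne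
  have hpu₀ : 0 < p u₀s := lt_of_lt_of_le (norm_pos_iff.mpr hu₀sne) (hp u₀s hu₀sDK)
  -- one-dimensionality of the fixed space
  have hspan1 : ∀ z : Ks, ∃ r : ℝ, z = r • u₀s := by
    intro z
    by_contra hcon
    push_neg at hcon
    have hzns : z ∉ Submodule.span ℝ ({u₀s} : Set Ks) := by
      intro h
      obtain ⟨r, hr⟩ := Submodule.mem_span_singleton.mp h
      exact hcon r hr.symm
    haveI : FiniteDimensional ℝ (Submodule.span ℝ ({u₀s} : Set Ks)) :=
      FiniteDimensional.span_of_finite ℝ (Set.finite_singleton _)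
    have hclosed' : IsClosed ((Submodule.span ℝ ({u₀s} : Set Ks)) : Set Ks) :=
      Submodule.closed_of_finiteDimensional _
    have hconv' : Convex ℝ ((Submodule.span ℝ ({u₀s} : Set Ks)) : Set Ks) :=
      fun x hx y hy a b ha hb hab => Submodule.add_mem _ (Submodule.smul_mem _ a hx)
        (Submodule.smul_mem _ b hy)
    obtain ⟨f, u, hfV, hfz⟩ := geometric_hahn_banach_closed_point hconv' hclosed' hzns
    have hf0 := vanish_on_submodule _ f u hfV
    have hfu₀ : f u₀s = 0 := hf0 _ (Submodule.mem_span_singleton_self _)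
    obtain ⟨t, ht⟩ := hdual f
    have ht' : f u₀s = t * p u₀s := by rw [ht]; simp
    have ht0 : t = 0 := by
      rw [hfu₀] at ht'
      rcases mul_eq_zero.mp ht'.symm with h | h
      · exact h
      · exact absurd h (ne_of_gt hpu₀)
    have hfzero : f = 0 := by rw [ht, ht0, zero_smul]
    rw [hfzero] at hfz
    have h1 := hfV 0 (Submodule.zero_mem _)
    simp at hfz h1
    linarith
  -- the coordinate functional
  set h' : Ks →L[ℝ] ℝ := (p u₀s)⁻¹ • p with hh'
  have hcoord : ∀ z : Ks, z = h' z • u₀s := by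
    intro z
    obtain ⟨r, hr⟩ := hspan1 z
    have h1 : h' z = r := by
      rw [hr, hh']
      simp only [ContinuousLinearMap.smul_apply, map_smul, smul_eq_mul]
      field_simp
    rw [h1]
    exact hr
  set y' : X →L[ℝ] ℝ := h'.comp eK with hy'def
  have hkey : ∀ x : X, e x = y' x • u₀ := by
    intro x
    have h1 : eK x = (h' (eK x)) • u₀s := hcoord (eK x)
    have h2 : ((eK x : Ks) : X) = (((h' (eK x)) • u₀s : Ks) : X) := by rw [← h1]
    rw [heKcoe] at h2
    rw [h2]
    push_cast
    rfl
  have hy'u₀ : y' u₀ = 1 := by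
    have h1 : eK u₀ = u₀s := heKK u₀s
    show h' (eK u₀) = 1
    rw [h1, hh']
    simp only [ContinuousLinearMap.smul_apply, smul_eq_mul]
    exact inv_mul_cancel₀ (ne_of_gt hpu₀)
  have hy'ne : y' ≠ 0 := by
    intro h
    rw [h] at hy'u₀
    simp at hy'u₀
  have hcoef : ∀ a b : ℝ, a • u₀ = b • u₀ → a = b := by
    intro a b h
    have h1 : (a - b) • u₀ = 0 := by rw [sub_smul, h, sub_self]
    rcases smul_eq_zero.mp h1 with h' | h'
    · linarith [sub_eq_zero.mp (by linarith [h'] : a - b = 0)]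
    · exact absurd h' hu₀ne
  have hsc : ∀ r : ℝ, r • u₀ ∈ C → 0 ≤ r := by
    intro r hr
    by_contra hneg
    push_neg at hneg
    have h1 : -(r • u₀) ∈ C := by
      have := hcone (-r) 0 (by linarith) le_rfl u₀ hu₀C u₀ hu₀C
      simpa [neg_smul] using this
    have h2 := hpointed _ hr h1
    rcases smul_eq_zero.mp h2 with h' | h'
    · linarith
    · exact hu₀ne h'
  -- the character
  set rf : ℝ → ℝ := fun t => y' (T t u₀) with hrf
  have hrfix : ∀ t, 0 ≤ t → T t u₀ = rf t • u₀ := by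
    intro t ht
    have h1 : e (T t u₀) = T t u₀ := by rw [← hecomm t ht, hu₀fix]
    have h2 := hkey (T t u₀)
    rw [h1] at h2
    exact h2
  have hr0 : ∀ t, 0 ≤ t → 0 ≤ rf t := by
    intro t ht
    apply hsc
    rw [← hrfix t ht]
    exact hTpos t ht u₀ hu₀C
  have hrmul : ∀ t s, 0 ≤ t → 0 ≤ s → rf (t + s) = rf t * rf s := by
    intro t s ht hs
    apply hcoef
    rw [← hrfix (t+s) (by linarith)]
    have h1 : T (t + s) u₀ = T t (T s u₀) := by rw [hTsg t s ht hs]; rfl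
    rw [h1, hrfix s hs, map_smul, hrfix t ht, smul_smul, mul_comm (rf s) (rf t)]
  have hr1 : rf 0 = 1 := by
    apply hcoef
    rw [← hrfix 0 le_rfl, hT0]
    simp
  have hrbound : ∀ t, 0 ≤ t → rf t ≤ M' := by
    intro t ht
    have h1 : ‖T t u₀‖ ≤ M' * ‖u₀‖ := hTnorm t ht u₀
    rw [hrfix t ht, norm_smul, Real.norm_eq_abs, abs_of_nonneg (hr0 t ht)] at h1
    have hnu : 0 < ‖u₀‖ := norm_pos_iff.mpr hu₀ne
    exact le_of_mul_le_mul_right h1 hnu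
  have hrle1 : ∀ t, 0 ≤ t → rf t ≤ 1 := by
    intro t ht
    by_contra hgt
    push_neg at hgt
    have hpow : ∀ n : ℕ, rf t ^ n = rf ((n : ℝ) * t) := by
      intro n
      induction n with
      | zero => simpa using hr1.symm
      | succ n ih =>
        have heq : ((n + 1 : ℕ) : ℝ) * t = t + (n : ℝ) * t := by push_cast; ring
        rw [heq, hrmul t ((n:ℝ) * t) ht (by positivity), pow_succ, ih, mul_comm]
    obtain ⟨n, hn⟩ := ((tendsto_pow_atTop_atTop_of_one_lt hgt).eventually_gt_atTop M').exists
    have h1 := hrbound ((n : ℝ) * t) (by positivity)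
    rw [← hpow] at h1
    linarith
  have hrfix1 : ∀ t, 0 ≤ t → rf t = 1 := by
    intro t ht
    rcases eq_or_lt_of_le (hrle1 t ht) with h | h
    · exact h
    have hlim : Tendsto rf ↑U (𝓝 1) := by
      have h2 : Tendsto (fun s => y' (T s u₀)) ↑U (𝓝 (y' (e u₀))) :=
        (y'.continuous.tendsto _).comp (he u₀)
      rw [hu₀fix, hy'u₀] at h2
      exact h2
    have h3 : {s : ℝ | dist (rf s) 1 < (1 - rf t)/2} ∈ (↑U : Filter ℝ) :=
      Metric.tendsto_nhds.mp hlim _ (by linarith)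
    have h4 : Ici t ∈ (↑U : Filter ℝ) := hUle (Ici_mem_atTop t)
    obtain ⟨s, hs1, hs2⟩ := Ultrafilter.nonempty_of_mem (Filter.inter_mem h3 h4)
    have hs2' : t ≤ s := hs2
    have h5 : rf s ≤ rf t := by
      have h6 : rf s = rf t * rf (s - t) := by
        have := hrmul t (s - t) ht (by linarith)
        rwa [show t + (s - t) = s from by ring] at this
      rw [h6]
      have h7 := hrle1 (s - t) (by linarith)
      have h8 := hr0 t ht
      nlinarith
    have h9 : |rf s - 1| < (1 - rf t)/2 := by
      have h10 : dist (rf s) 1 < (1 - rf t)/2 := hs1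
      rwa [Real.dist_eq] at h10
    rw [abs_lt] at h9
    linarith [h9.1]
  have hfixu₀ : ∀ t, 0 ≤ t → T t u₀ = u₀ := by
    intro t ht
    rw [hrfix t ht, hrfix1 t ht, one_smul]
  have hfix : ∀ t, 0 ≤ t → ∀ x : X, T t (e x) = e x := by
    intro t ht x
    rw [hkey x, map_smul, hfixu₀ t ht]
  -- convergence
  have hconv : ∀ x : X, Tendsto (fun t => T t x) atTop (𝓝 (e x)) := by
    intro x
    have h1 := hflight x
    have h2 : Tendsto (fun t => e x + T t (x - e x)) atTop (𝓝 (e x + 0)) :=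
      tendsto_const_nhds.add h1
    rw [add_zero] at h2
    apply h2.congr'
    filter_upwards [Ici_mem_atTop (0:ℝ)] with t ht
    have ht' : (0:ℝ) ≤ t := ht
    have h3 : T t x = T t (e x) + T t (x - e x) := by
      rw [← map_add]
      congr 1
      abel
    rw [h3, hfix t ht' x]
  -- properties of y'
  have hy'pos : ∀ z ∈ C, 0 ≤ y' z := by
    intro z hz
    apply hsc
    rw [← hkey z]
    exact hepos z hz
  have hy'inv : ∀ t, 0 ≤ t → ∀ z : X, y' (T t z) = y' z := by
    intro t ht z
    apply hcoef
    calc y' (T t z) • u₀ = e (T t z) := (hkey (T t z)).symm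
      _ = T t (e z) := (hecomm t ht z).symm
      _ = e z := hfix t ht z
      _ = y' z • u₀ := hkey z
  have hy'strict : ∀ z ∈ C, z ≠ 0 → 0 < y' z := by
    intro z hz hzne
    obtain ⟨τ, hτ, hAI⟩ := hstrpos z hz hzne
    have h1 := hAI y' hy'pos hy'ne
    rwa [hy'inv τ hτ z] at h1
  -- assembly
  refine ⟨e, hconv, fun _ => ⟨u₀, y', ⟨hu₀C, hAI₀, fun t ht => hfixu₀ t ht⟩, ⟨hy'strict, ?_⟩, hkey⟩⟩
  intro t ht
  exact ContinuousLinearMap.ext (fun z => hy'inv t ht z)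
end
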